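/- arXiv:1201.3221 — 3 statements merged into one kernel-verified Lean document; each statement's English description precedes it below -/
import Mathlib

section
/- Any symmetric matrix of rank r over a field has an invertible r × r principal submatrix. -/
open Matrix

theorem stmt6 {n : Type*} [Fintype n] [DecidableEq n] {K : Type*} [Field K]
    (M : Matrix n n K) (hM : M.IsSymm) (r : ℕ) (hr : M.rank = r) :
    ∃ s : Finset n, s.card = r ∧
      (M.submatrix (fun i : s => (i : n)) (fun i : s => (i : n))).det ≠ 0 := by
  classical
  -- rows of M spanning the row space, linearly independent
  obtain ⟨b, hb_sub, hb_span, hb_li⟩ := exists_linearIndependent K (Set.range M)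
  have hb_fin : b.Finite := hb_li.setFinite
  have : Fintype b := hb_fin.fintype
  -- choose an index for each row in b
  have hchoice : ∀ x ∈ b, ∃ i, M i = x := fun x hx => hb_sub hx
  choose f hf using hchoice
  set s : Finset n := hb_fin.toFinset.attach.image (fun x => f x.1 (hb_fin.mem_toFinset.mp x.2))
    with hs_def
  have hMs : ∀ i ∈ s, M i ∈ b := by
    intro i hi
    simp only [hs_def, Finset.mem_image, Finset.mem_attach, true_and] at hi
    obtain ⟨x, hx⟩ := hi
    rw [← hx, hf]
    exact hb_fin.mem_toFinset.mp x.2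
  have hMinj : ∀ i ∈ s, ∀ j ∈ s, M i = M j → i = j := by
    intro i hi j hj hij
    simp only [hs_def, Finset.mem_image, Finset.mem_attach, true_and] at hi hj
    obtain ⟨x, hx⟩ := hi
    obtain ⟨y, hy⟩ := hj
    have hx1 : M i = x.1 := by rw [← hx, hf]
    have hy1 : M j = y.1 := by rw [← hy, hf]
    have hxy : x = y := Subtype.ext (by rw [← hx1, ← hy1, hij])
    rw [← hx, ← hy]
    subst hxy
    rfl
  have hbs : ∀ x ∈ b, ∃ i ∈ s, M i = x := by
    intro x hx
    refine ⟨f x hx, ?_, hf x hx⟩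
    simp only [hs_def, Finset.mem_image, Finset.mem_attach, true_and]
    exact ⟨⟨x, hb_fin.mem_toFinset.mpr hx⟩, rfl⟩
  -- cardinality of s is r
  have hfinr : Module.finrank K (Submodule.span K b) = r := by
    rw [hb_span]; exact (Matrix.rank_eq_finrank_span_row M).symm.trans hr
  have hcard_b : hb_fin.toFinset.card = r := by
    have h1 := finrank_span_set_eq_card (R := K) (s := b) hb_li
    rw [hfinr] at h1
    rw [hb_fin.card_toFinset]
    rw [Set.toFinset_card] at h1
    exact h1.symm
  have hinj_f : Function.Injective
      (fun x : hb_fin.toFinset => f x.1 (hb_fin.mem_toFinset.mp x.2)) := by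
    intro x y hxy
    have h2 := congrArg M hxy
    simp only [hf] at h2
    exact Subtype.ext h2
  have hs_card : s.card = r := by
    rw [← hcard_b, hs_def, Finset.card_image_of_injective _ hinj_f, Finset.card_attach]
  refine ⟨s, hs_card, ?_⟩
  -- key: a mulVec image vanishing on s is zero
  have key : ∀ y : n → K, (∀ j ∈ s, M j ⬝ᵥ y = 0) → M *ᵥ y = 0 := by
    intro y hy
    funext i
    show M i ⬝ᵥ y = 0
    have hmem : M i ∈ Submodule.span K b := by
      rw [hb_span]; exact Submodule.subset_span ⟨i, rfl⟩
    refine Submodule.span_induction ?_ ?_ ?_ ?_ hmem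
    · intro x hx
      obtain ⟨j, hj, rfl⟩ := hbs x hx
      exact hy j hj
    · simp
    · intro u v _ _ hu hv
      simp [add_dotProduct, hu, hv]
    · intro a u _ hu
      simp [smul_dotProduct, hu]
  -- rows of M indexed by s are linearly independent
  have hli_s : LinearIndependent K (fun i : s => M (i : n)) := by
    refine hb_li.comp (fun i : s => (⟨M (i : n), hMs i i.2⟩ : b)) ?_
    intro i j hij
    have h1 : M (i : n) = M (j : n) := congrArg Subtype.val hij
    exact Subtype.ext (hMinj i i.2 j j.2 h1)
  -- the submatrix has linearly independent rows, hence is a unit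
  have hli_sub : LinearIndependent K
      (fun i : s => (M.submatrix (fun i : s => (i : n)) (fun i : s => (i : n))) i) := by
    rw [Fintype.linearIndependent_iff]
    intro g hg
    set w : n → K := ∑ i : s, g i • M (i : n) with hw_def
    have hw_s : ∀ j ∈ s, w j = 0 := by
      intro j hj
      have := congrFun hg ⟨j, hj⟩
      simpa [hw_def, Finset.sum_apply, submatrix_apply] using this
    have hw_mem : w ∈ LinearMap.range M.mulVecLin := by
      rw [Matrix.range_mulVecLin, show M.col = M from hM.eq]
      exact Submodule.sum_mem _ fun i _ =>
        Submodule.smul_mem _ _ (Submodule.subset_span ⟨(i : n), rfl⟩)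
    obtain ⟨y, hy⟩ := hw_mem
    have hy' : M *ᵥ y = w := hy
    have hy_s : ∀ j ∈ s, M j ⬝ᵥ y = 0 := by
      intro j hj
      have : (M *ᵥ y) j = 0 := by rw [hy']; exact hw_s j hj
      exact this
    have hw0 : w = 0 := by rw [← hy']; exact key y hy_s
    exact Fintype.linearIndependent_iff.mp hli_s g (hw_def ▸ hw0)
  have hunit : IsUnit (M.submatrix (fun i : s => (i : n)) (fun i : s => (i : n))) :=
    Matrix.linearIndependent_rows_iff_isUnit.mp hli_sub
  have := ((Matrix.isUnit_iff_isUnit_det _).mp hunit)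
  exact this.ne_zero
end

section
/- Let G be a connected graph of order n with 0-1 incidence matrix X, let S be a set of n-1 edges of G, and A the adjacency matrix of the line graph. Then over GF(2), det(A(S,S)) equals n mod 2 if the subgraph induced by S is a spanning tree of G, and 0 otherwise. -/
open SimpleGraph Matrix

open Classical in
/-- The adjacency matrix of the line graph of `G`, over the field with two elements. -/
noncomputable def lineAdjMat2 {V : Type*} [Fintype V] [DecidableEq V] (G : SimpleGraph V)
    [Fintype G.edgeSet] : Matrix G.edgeSet G.edgeSet (ZMod 2) :=
  fun e f => if G.lineGraph.Adj e f then 1 else 0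

set_option linter.unusedSectionVars false

section Aux

variable {V : Type*} [Fintype V] [DecidableEq V]

/-- The column of the incidence matrix corresponding to an edge. -/
noncomputable def colV (q : Sym2 V) : V → ZMod 2 :=
  fun v => if v ∈ q then 1 else 0

lemma pi_add_self (x : V → ZMod 2) : x + x = 0 := by
  funext v
  exact CharTwo.add_self_eq_zero _

lemma colV_mk {a b : V} (hab : a ≠ b) :
    colV s(a, b) = Pi.single a 1 + Pi.single b 1 := by
  funext v
  simp only [colV, Sym2.mem_iff, Pi.add_apply, Pi.single_apply]
  by_cases h1 : v = a <;> by_cases h2 : v = b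
  · exact absurd (h1.symm.trans h2) hab
  · simp [h1, h2, hab, Ne.symm hab]
  · simp [h1, h2, hab, Ne.symm hab]
  · simp [h1, h2]

lemma colV_sum {q : Sym2 V} (hq : ¬ q.IsDiag) : ∑ v, colV q v = 0 := by
  induction q using Sym2.ind with
  | _ a b =>
    have hab : a ≠ b := by simpa using hq
    rw [colV_mk hab]
    simp only [Pi.add_apply, Finset.sum_add_distrib, Finset.sum_pi_single',
      Finset.mem_univ, if_true]
    decide

lemma walk_colV_sum {HS : SimpleGraph V} : ∀ {u w : V} (p : HS.Walk u w),
    (p.edges.map colV).sum = Pi.single u 1 + Pi.single w 1 := by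
  intro u w p
  induction p with
  | nil => rw [Walk.edges_nil, List.map_nil, List.sum_nil, pi_add_self]
  | @cons a b c h p ih =>
    rw [Walk.edges_cons, List.map_cons, List.sum_cons, ih, colV_mk h.ne]
    linear_combination pi_add_self (Pi.single b (1 : ZMod 2))

end Aux
section Aux2

variable {V : Type*} [Fintype V] [DecidableEq V] {G : SimpleGraph V} [Fintype G.edgeSet]

/-- The incidence matrix of the subgraph spanned by a set `S` of edges, over `GF(2)`. -/
noncomputable def incM (S : Finset G.edgeSet) : Matrix V S (ZMod 2) :=
  fun v e => colV ((e : G.edgeSet) : Sym2 V) v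

lemma edge_repr (e : G.edgeSet) : ∃ a b : V, a ≠ b ∧ (e : Sym2 V) = s(a, b) := by
  obtain ⟨q, hq⟩ := e
  revert hq
  induction q using Sym2.ind with
  | _ a b => exact fun hq => ⟨a, b, (G.mem_edgeSet.mp hq).ne, rfl⟩

variable (S : Finset G.edgeSet)

lemma incM_mulVec (x : S → ZMod 2) :
    (incM S).mulVec x = ∑ e : S, x e • colV ((e : G.edgeSet) : Sym2 V) := by
  funext v
  simp only [Matrix.mulVec, dotProduct, incM, Finset.sum_apply, Pi.smul_apply, smul_eq_mul]
  exact Finset.sum_congr rfl fun e _ => mul_comm _ _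

lemma incM_sum_mulVec (x : S → ZMod 2) : ∑ v, (incM S).mulVec x v = 0 := by
  rw [incM_mulVec]
  simp only [Finset.sum_apply, Pi.smul_apply, smul_eq_mul]
  rw [Finset.sum_comm]
  refine Finset.sum_eq_zero fun e _ => ?_
  rw [← Finset.mul_sum, colV_sum (G.not_isDiag_of_mem_edgeSet (e : G.edgeSet).2), mul_zero]

lemma col_mem_range (e : S) :
    colV ((e : G.edgeSet) : Sym2 V) ∈ LinearMap.range (incM S).mulVecLin := by
  refine ⟨Pi.single e 1, ?_⟩
  rw [Matrix.mulVecLin_apply, incM_mulVec]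
  rw [Finset.sum_eq_single e (fun e' _ hne => by rw [Pi.single_eq_of_ne hne, zero_smul])
    (fun h => absurd (Finset.mem_univ e) h)]
  rw [Pi.single_eq_same, one_smul]

lemma single_add_single_mem {HS : SimpleGraph V}
    (hadj : ∀ a b : V, HS.Adj a b → ∃ e : S, ((e : G.edgeSet) : Sym2 V) = s(a, b))
    {u w : V} (h : HS.Reachable u w) :
    Pi.single u 1 + Pi.single w 1 ∈ LinearMap.range (incM S).mulVecLin := by
  obtain ⟨p⟩ := h
  induction p with
  | nil => rw [pi_add_self]; exact Submodule.zero_mem _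
  | @cons a b c hab p ih =>
    obtain ⟨e, he⟩ := hadj _ _ hab
    have hcol := col_mem_range S e
    rw [he, colV_mk hab.ne] at hcol
    have hmem := Submodule.add_mem _ hcol ih
    have heq : ((Pi.single a 1 : V → ZMod 2) + (Pi.single b 1 : V → ZMod 2))
          + ((Pi.single b 1 : V → ZMod 2) + (Pi.single c 1 : V → ZMod 2))
        = (Pi.single a 1 : V → ZMod 2) + (Pi.single c 1 : V → ZMod 2) := by
      linear_combination pi_add_self (Pi.single b (1 : ZMod 2) : V → ZMod 2)
    rwa [heq] at hmem

lemma mem_range_of_sum_eq_zero {HS : SimpleGraph V}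
    (hadj : ∀ a b : V, HS.Adj a b → ∃ e : S, ((e : G.edgeSet) : Sym2 V) = s(a, b))
    (hconn : HS.Preconnected) [Nonempty V]
    (y : V → ZMod 2) (hy : ∑ v, y v = 0) :
    y ∈ LinearMap.range (incM S).mulVecLin := by
  obtain ⟨v₀⟩ := ‹Nonempty V›
  have hrw : y = ∑ v, y v • (Pi.single v 1 + Pi.single v₀ 1) := by
    have h1 : ∑ v, y v • (Pi.single v (1 : ZMod 2)) = y := by
      have : ∀ v : V, y v • (Pi.single v (1 : ZMod 2)) = (Pi.single v (y v) : V → ZMod 2) := by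
        intro v
        funext w
        simp [Pi.single_apply]
      rw [Finset.sum_congr rfl fun v _ => this v, Finset.univ_sum_single]
    have h2 : ∑ v, y v • (Pi.single v₀ (1 : ZMod 2)) = (0 : V → ZMod 2) := by
      rw [← Finset.sum_smul, hy, zero_smul]
    simp only [smul_add, Finset.sum_add_distrib, h1, h2, add_zero]
  rw [hrw]
  exact Submodule.sum_mem _ fun v _ =>
    Submodule.smul_mem _ _ (single_add_single_mem S hadj (hconn v v₀))

end Aux2
section Aux3

variable {V : Type*} [Fintype V] [DecidableEq V]

open Classical in
/-- The linear functional summing coordinates over a set. -/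
noncomputable def indF (C : Set V) : (V → ZMod 2) →ₗ[ZMod 2] ZMod 2 where
  toFun y := ∑ v ∈ Finset.univ.filter (· ∈ C), y v
  map_add' x y := by simp [Finset.sum_add_distrib]
  map_smul' c y := by simp [Finset.mul_sum]

open Classical in
lemma indF_single (C : Set V) (v : V) (c : ZMod 2) :
    indF C (Pi.single v c) = if v ∈ C then c else 0 := by
  classical
  simp only [indF, LinearMap.coe_mk, AddHom.coe_mk]
  rw [Finset.sum_pi_single']
  simp

/-- The sum-of-all-coordinates functional. -/
noncomputable def sumF : (V → ZMod 2) →ₗ[ZMod 2] ZMod 2 := indF Set.univ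

lemma sumF_apply (y : V → ZMod 2) : sumF y = ∑ v, y v := by
  simp [sumF, indF]

lemma sumF_surj [Nonempty V] : LinearMap.range (sumF (V := V)) = ⊤ := by
  rw [LinearMap.range_eq_top]
  intro c
  obtain ⟨v⟩ := ‹Nonempty V›
  exact ⟨Pi.single v c, by rw [sumF, indF_single]; simp⟩

lemma finrank_ker_sumF [Nonempty V] :
    Module.finrank (ZMod 2) (LinearMap.ker (sumF (V := V))) + 1 = Fintype.card V := by
  have h := LinearMap.finrank_range_add_finrank_ker (sumF (V := V))
  rw [Module.finrank_pi, sumF_surj, finrank_top, Module.finrank_self] at h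
  omega

variable {G : SimpleGraph V} [Fintype G.edgeSet] (S : Finset G.edgeSet)

lemma incM_ker_eq_bot {HS : SimpleGraph V}
    (hadj : ∀ a b : V, HS.Adj a b → ∃ e : S, ((e : G.edgeSet) : Sym2 V) = s(a, b))
    (hconn : HS.Preconnected) [Nonempty V]
    (hcard : S.card + 1 = Fintype.card V) :
    LinearMap.ker (incM S).mulVecLin = ⊥ := by
  have hrange : LinearMap.range (incM S).mulVecLin = LinearMap.ker (sumF (V := V)) := by
    apply le_antisymm
    · rintro _ ⟨x, rfl⟩
      rw [LinearMap.mem_ker, sumF_apply]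
      exact incM_sum_mulVec S x
    · intro y hy
      exact mem_range_of_sum_eq_zero S hadj hconn y (by rw [← sumF_apply]; exact hy)
  have h2 := LinearMap.finrank_range_add_finrank_ker (incM S).mulVecLin
  rw [hrange, Module.finrank_pi, Fintype.card_coe] at h2
  have h1 := finrank_ker_sumF (V := V)
  have h0 : Module.finrank (ZMod 2) (LinearMap.ker (incM S).mulVecLin) = 0 := by omega
  exact Submodule.finrank_eq_zero.mp h0

lemma exists_ker_of_not_preconnected {HS : SimpleGraph V}
    (hadj2 : ∀ (e : S) (a b : V), ((e : G.edgeSet) : Sym2 V) = s(a, b) → HS.Adj a b)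
    (hcard : S.card + 1 = Fintype.card V)
    (hnc : ¬ HS.Preconnected) :
    ∃ x : S → ZMod 2, x ≠ 0 ∧ (incM S).mulVec x = 0 := by
  rw [SimpleGraph.Preconnected] at hnc
  push_neg at hnc
  obtain ⟨u, w, huw⟩ := hnc
  set C1 : Set V := {v | HS.Reachable v u} with hC1
  set C2 : Set V := {v | HS.Reachable v w} with hC2
  set g : (V → ZMod 2) →ₗ[ZMod 2] ZMod 2 × ZMod 2 := (indF C1).prod (indF C2) with hg
  have hkey : ∀ e : S, g (colV ((e : G.edgeSet) : Sym2 V)) = 0 := by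
    intro e
    obtain ⟨a, b, hab, he⟩ := edge_repr (e : G.edgeSet)
    have hAdj : HS.Adj a b := hadj2 e a b he
    have hr1 : (a ∈ C1) = (b ∈ C1) := by
      simp only [hC1, Set.mem_setOf_eq, eq_iff_iff]
      exact ⟨fun h => hAdj.symm.reachable.trans h, fun h => hAdj.reachable.trans h⟩
    have hr2 : (a ∈ C2) = (b ∈ C2) := by
      simp only [hC2, Set.mem_setOf_eq, eq_iff_iff]
      exact ⟨fun h => hAdj.symm.reachable.trans h, fun h => hAdj.reachable.trans h⟩
    rw [he, colV_mk hab]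
    rw [map_add]
    simp only [hg, LinearMap.prod_apply, Function.prod, indF_single, hr1, hr2, Prod.mk_add_mk,
      Prod.mk_eq_zero]
    constructor
    · rw [hr1]
      exact CharTwo.add_self_eq_zero _
    · rw [hr2]
      exact CharTwo.add_self_eq_zero _
  have hsurj : LinearMap.range g = ⊤ := by
    rw [LinearMap.range_eq_top]
    rintro ⟨c1, c2⟩
    refine ⟨c1 • (Pi.single u 1 : V → ZMod 2) + c2 • (Pi.single w 1 : V → ZMod 2), ?_⟩
    have hu1 : u ∈ C1 := SimpleGraph.Reachable.refl u
    have hu2 : u ∉ C2 := huw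
    have hw1 : w ∉ C1 := fun h => huw h.symm
    have hw2 : w ∈ C2 := SimpleGraph.Reachable.refl w
    rw [map_add, _root_.map_smul, _root_.map_smul]
    simp only [hg, LinearMap.prod_apply, Function.prod, indF_single, if_pos hu1, if_neg hu2,
      if_neg hw1, if_pos hw2]
    simp [Prod.ext_iff]
  have hsub : LinearMap.range (incM S).mulVecLin ≤ LinearMap.ker g := by
    rintro _ ⟨x, rfl⟩
    rw [LinearMap.mem_ker, Matrix.mulVecLin_apply, incM_mulVec, map_sum]
    exact Finset.sum_eq_zero fun e _ => by rw [_root_.map_smul, hkey e, smul_zero]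
  have hgrk := LinearMap.finrank_range_add_finrank_ker g
  rw [hsurj, finrank_top, Module.finrank_prod, Module.finrank_self, Module.finrank_pi] at hgrk
  have hle : Module.finrank (ZMod 2) (LinearMap.range (incM S).mulVecLin)
      ≤ Module.finrank (ZMod 2) (LinearMap.ker g) := Submodule.finrank_mono hsub
  have hf := LinearMap.finrank_range_add_finrank_ker (incM S).mulVecLin
  rw [Module.finrank_pi, Fintype.card_coe] at hf
  have hker_ne : LinearMap.ker (incM S).mulVecLin ≠ ⊥ := by
    intro h
    rw [h, finrank_bot] at hf
    omega
  obtain ⟨x, hxmem, hxne⟩ := Submodule.exists_mem_ne_zero_of_ne_bot hker_ne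
  exact ⟨x, hxne, by simpa [Matrix.mulVecLin_apply] using hxmem⟩

lemma exists_ker_of_cycle {HS : SimpleGraph V}
    (hedges : ∀ q ∈ HS.edgeSet, ∃ e : S, ((e : G.edgeSet) : Sym2 V) = q)
    {v : V} {c : HS.Walk v v} (hc : c.IsCycle) :
    ∃ x : S → ZMod 2, x ≠ 0 ∧ (incM S).mulVec x = 0 := by
  classical
  refine ⟨fun e => if ((e : G.edgeSet) : Sym2 V) ∈ c.edges then 1 else 0, ?_, ?_⟩
  · have hlen := hc.three_le_length
    have hne : c.edges ≠ [] := by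
      intro h
      have := c.length_edges
      rw [h] at this
      simp at this
      omega
    obtain ⟨q, hq⟩ := List.exists_mem_of_ne_nil _ hne
    obtain ⟨e, he⟩ := hedges q (c.edges_subset_edgeSet hq)
    intro h0
    have := congrFun h0 e
    rw [he, if_pos hq] at this
    simp at this
  · rw [incM_mulVec]
    have hstep : ∀ e : S,
        (if ((e : G.edgeSet) : Sym2 V) ∈ c.edges then (1 : ZMod 2) else 0)
            • colV ((e : G.edgeSet) : Sym2 V)
          = if ((e : G.edgeSet) : Sym2 V) ∈ c.edges
              then colV ((e : G.edgeSet) : Sym2 V) else 0 := by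
      intro e
      split <;> simp
    rw [Finset.sum_congr rfl fun e _ => hstep e, ← Finset.sum_filter]
    have hbij : ∑ e ∈ Finset.univ.filter
          (fun e : S => ((e : G.edgeSet) : Sym2 V) ∈ c.edges),
          colV ((e : G.edgeSet) : Sym2 V)
        = ∑ q ∈ c.edges.toFinset, colV q := by
      refine Finset.sum_bij (fun e _ => ((e : G.edgeSet) : Sym2 V)) ?_ ?_ ?_ ?_
      · intro e he
        rw [List.mem_toFinset]
        exact (Finset.mem_filter.mp he).2
      · intro e1 h1 e2 h2 h
        exact Subtype.ext (Subtype.ext h)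
      · intro q hq
        obtain ⟨e, he⟩ := hedges q (c.edges_subset_edgeSet (List.mem_toFinset.mp hq))
        exact ⟨e, Finset.mem_filter.mpr ⟨Finset.mem_univ e,
          by rw [he]; exact List.mem_toFinset.mp hq⟩, he⟩
      · intro e he
        rfl
    rw [hbij, List.sum_toFinset _ hc.edges_nodup, walk_colV_sum c, pi_add_self]

end Aux3
section Aux4

variable {V : Type*} [Fintype V] [DecidableEq V] {G : SimpleGraph V} [Fintype G.edgeSet]

lemma const_of_adj {HS : SimpleGraph V} (y : V → ZMod 2)
    (h : ∀ a b : V, HS.Adj a b → y a = y b) {u w : V} (hr : HS.Reachable u w) :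
    y u = y w := by
  obtain ⟨p⟩ := hr
  induction p with
  | nil => rfl
  | @cons a b c hab p ih => exact (h a b hab).trans ih

open Classical in
lemma lineAdj_eq (e f : G.edgeSet) :
    lineAdjMat2 G e f = ∑ v, colV (e : Sym2 V) v * colV (f : Sym2 V) v := by
  have hstep : ∀ v : V, colV (e : Sym2 V) v * colV (f : Sym2 V) v
      = if v ∈ (e : Sym2 V) ∧ v ∈ (f : Sym2 V) then 1 else 0 := by
    intro v
    simp only [colV]
    by_cases h1 : v ∈ (e : Sym2 V) <;> by_cases h2 : v ∈ (f : Sym2 V) <;>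
      simp [h1, h2]
  rw [Finset.sum_congr rfl fun v _ => hstep v, Finset.sum_boole]
  by_cases hef : e = f
  · subst hef
    have hirr : ¬ G.lineGraph.Adj e e := G.lineGraph.irrefl
    obtain ⟨a, b, hab, hrep⟩ := edge_repr e
    have hfil : Finset.univ.filter
        (fun v => v ∈ (e : Sym2 V) ∧ v ∈ (e : Sym2 V)) = {a, b} := by
      ext v
      simp [hrep, Sym2.mem_iff]
    rw [lineAdjMat2, if_neg hirr, hfil,
      Finset.card_insert_of_notMem (by simp [hab]), Finset.card_singleton]
    decide
  · by_cases hadj : G.lineGraph.Adj e f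
    · obtain ⟨hne, v, hv1, hv2⟩ := SimpleGraph.lineGraph_adj_iff_exists.mp hadj
      have huniq : ∀ w : V, w ∈ (e : Sym2 V) ∧ w ∈ (f : Sym2 V) → w = v := by
        rintro w ⟨hw1, hw2⟩
        by_contra hwv
        exact (fun h => hef (Subtype.ext h))
          (((Sym2.mem_and_mem_iff hwv).mp ⟨hw1, hv1⟩).trans
            ((Sym2.mem_and_mem_iff hwv).mp ⟨hw2, hv2⟩).symm)
      have hfil : Finset.univ.filter
          (fun w => w ∈ (e : Sym2 V) ∧ w ∈ (f : Sym2 V)) = {v} := by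
        ext w
        simp only [Finset.mem_filter, Finset.mem_univ, true_and, Finset.mem_singleton]
        exact ⟨fun h => huniq w h, fun h => h ▸ ⟨hv1, hv2⟩⟩
      rw [lineAdjMat2, if_pos hadj, hfil, Finset.card_singleton, Nat.cast_one]
    · have hfil : Finset.univ.filter
          (fun w => w ∈ (e : Sym2 V) ∧ w ∈ (f : Sym2 V)) = ∅ := by
        ext w
        simp only [Finset.mem_filter, Finset.mem_univ, true_and, Finset.notMem_empty,
          iff_false, not_and]
        intro h1 h2
        exact hadj (SimpleGraph.lineGraph_adj_iff_exists.mpr ⟨hef, w, h1, h2⟩)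
      rw [lineAdjMat2, if_neg hadj, hfil, Finset.card_empty, Nat.cast_zero]

lemma submatrix_eq (S : Finset G.edgeSet) :
    (lineAdjMat2 G).submatrix (fun i : S => (i : G.edgeSet)) (fun i : S => (i : G.edgeSet))
      = (incM S)ᵀ * (incM S) := by
  ext i j
  rw [Matrix.submatrix_apply, Matrix.mul_apply]
  simp only [Matrix.transpose_apply, incM]
  exact lineAdj_eq (i : G.edgeSet) (j : G.edgeSet)

end Aux4
theorem stmt9 {V : Type*} [Fintype V] [DecidableEq V] (G : SimpleGraph V)
    [Fintype G.edgeSet] (hG : G.Connected) (n : ℕ) (hn : Fintype.card V = n)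
    (S : Finset G.edgeSet) (hS : S.card = n - 1)
    -- `⟨S⟩` : the spanning subgraph of `G` with edge set `S`
    (HS : SimpleGraph V)
    (hHS : HS = SimpleGraph.fromEdgeSet
      ((S.image (fun e : G.edgeSet => (e : Sym2 V)) : Finset (Sym2 V)) : Set (Sym2 V))) :
    (HS.IsTree →
        ((lineAdjMat2 G).submatrix (fun i : S => (i : G.edgeSet))
          (fun i : S => (i : G.edgeSet))).det = (n : ZMod 2)) ∧
    (¬ HS.IsTree →
        ((lineAdjMat2 G).submatrix (fun i : S => (i : G.edgeSet))
          (fun i : S => (i : G.edgeSet))).det = 0) := by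
  classical
  have hneV : Nonempty V := hG.nonempty
  have hn1 : 1 ≤ n := by rw [← hn]; exact Fintype.card_pos
  have hcard : S.card + 1 = Fintype.card V := by rw [hS, hn]; omega
  have hadj : ∀ a b : V, HS.Adj a b ↔ ∃ e : S, ((e : G.edgeSet) : Sym2 V) = s(a, b) := by
    intro a b
    rw [hHS, SimpleGraph.fromEdgeSet_adj]
    constructor
    · rintro ⟨hmem, hne'⟩
      simp only [Finset.coe_image, Set.mem_image, Finset.mem_coe] at hmem
      obtain ⟨e, heS, he⟩ := hmem
      exact ⟨⟨e, heS⟩, he⟩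
    · rintro ⟨e, he⟩
      refine ⟨?_, ?_⟩
      · simp only [Finset.coe_image, Set.mem_image, Finset.mem_coe]
        exact ⟨(e : G.edgeSet), e.2, he⟩
      · exact (G.mem_edgeSet.mp (he ▸ (e : G.edgeSet).2)).ne
  have hadj1 : ∀ a b : V, HS.Adj a b → ∃ e : S, ((e : G.edgeSet) : Sym2 V) = s(a, b) :=
    fun a b h => (hadj a b).mp h
  have hadj2 : ∀ (e : S) (a b : V), ((e : G.edgeSet) : Sym2 V) = s(a, b) → HS.Adj a b :=
    fun e a b he => (hadj a b).mpr ⟨e, he⟩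
  rw [submatrix_eq S]
  set N := incM S with hN
  have hdet0 : ∀ x : S → ZMod 2, x ≠ 0 → (Nᵀ * N).mulVec x = 0 → (Nᵀ * N).det = 0 :=
    fun x hx h => Matrix.exists_mulVec_eq_zero_iff.mp ⟨x, hx, h⟩
  have hNtop : ∀ x : S → ZMod 2, (Nᵀ * N).mulVec x = Nᵀ.mulVec (N.mulVec x) :=
    fun x => (Matrix.mulVec_mulVec x Nᵀ N).symm
  have hNt1 : Nᵀ.mulVec (fun _ => (1 : ZMod 2)) = 0 := by
    funext e
    simp only [Matrix.mulVec, dotProduct, Matrix.transpose_apply, hN, incM, mul_one,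
      Pi.zero_apply]
    exact colV_sum (G.not_isDiag_of_mem_edgeSet (e : G.edgeSet).2)
  have hNty : ∀ (y : V → ZMod 2) (e : S) (a b : V),
      ((e : G.edgeSet) : Sym2 V) = s(a, b) → a ≠ b → Nᵀ.mulVec y e = y a + y b := by
    intro y e a b he hab
    simp only [Matrix.mulVec, dotProduct, Matrix.transpose_apply, hN, incM, colV, he,
      Sym2.mem_iff]
    have hsplit : ∀ v : V, (if v = a ∨ v = b then (1 : ZMod 2) else 0) * y v
        = (if v = a then y v else 0) + (if v = b then y v else 0) := by
      intro v
      by_cases h1 : v = a <;> by_cases h2 : v = b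
      · exact absurd (h1.symm.trans h2) hab
      · simp [h1, h2, hab, Ne.symm hab]
      · simp [h1, h2, hab, Ne.symm hab]
      · simp [h1, h2]
    rw [Finset.sum_congr rfl fun v _ => hsplit v, Finset.sum_add_distrib,
      Fintype.sum_ite_eq' a y, Fintype.sum_ite_eq' b y]
  constructor
  · intro hT
    have hconn := hT.isConnected
    have hker := incM_ker_eq_bot S hadj1 hconn.preconnected hcard
    rcases Nat.even_or_odd n with hev | hod
    · -- n even : determinant is zero and n = 0 in `ZMod 2`
      have hncast : (n : ZMod 2) = 0 := by
        obtain ⟨k, hk⟩ := hev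
        rw [hk]
        push_cast
        exact CharTwo.add_self_eq_zero _
      have hsum1 : ∑ v : V, (1 : ZMod 2) = 0 := by
        rw [Finset.sum_const, Finset.card_univ, hn, nsmul_eq_mul, mul_one, hncast]
      have hones : (fun _ : V => (1 : ZMod 2)) ∈ LinearMap.range N.mulVecLin :=
        mem_range_of_sum_eq_zero S hadj1 hconn.preconnected _ hsum1
      obtain ⟨x, hx⟩ := hones
      have hx0 : x ≠ 0 := by
        intro h
        rw [h, map_zero] at hx
        exact one_ne_zero (congrFun hx (Classical.arbitrary V)).symm
      have hxvec : N.mulVec x = fun _ => (1 : ZMod 2) := hx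
      have hdz : (Nᵀ * N).det = 0 :=
        hdet0 x hx0 (by rw [hNtop x, hxvec, hNt1])
      rw [hdz, hncast]
    · -- n odd : determinant is nonzero, hence 1 = n in `ZMod 2`
      have hncast : (n : ZMod 2) = 1 := by
        obtain ⟨k, hk⟩ := hod
        have h2 : (2 : ZMod 2) = 0 := by decide
        rw [hk]
        push_cast
        rw [h2]
        ring
      have hdetne : (Nᵀ * N).det ≠ 0 := by
        intro hdet
        obtain ⟨x, hx0, hx⟩ := Matrix.exists_mulVec_eq_zero_iff.mpr hdet
        set y := N.mulVec x with hy
        rw [hNtop x] at hx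
        have hyadj : ∀ a b : V, HS.Adj a b → y a = y b := by
          intro a b hab'
          obtain ⟨e, he⟩ := hadj1 a b hab'
          have hne : a ≠ b := (G.mem_edgeSet.mp (he ▸ (e : G.edgeSet).2)).ne
          have h0 : y a + y b = 0 := by
            rw [← hNty y e a b he hne]
            exact congrFun hx e
          exact (CharTwo.add_eq_iff_eq_add.mp h0).trans (zero_add _)
        have hyconst : ∀ v w : V, y v = y w :=
          fun v w => const_of_adj y hyadj (hconn.preconnected v w)
        have v₀ : V := Classical.arbitrary V
        have hsumy : ∑ v, y v = 0 := incM_sum_mulVec S x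
        have hsumy' : ∑ v : V, y v = (n : ZMod 2) * y v₀ := by
          rw [Finset.sum_congr rfl fun v _ => hyconst v v₀, Finset.sum_const,
            Finset.card_univ, hn, nsmul_eq_mul]
        have hyv0 : y v₀ = 0 := by
          rw [hsumy', hncast, one_mul] at hsumy
          exact hsumy
        have hy0 : y = 0 := funext fun v => (hyconst v v₀).trans hyv0
        have hxker : x ∈ LinearMap.ker N.mulVecLin := by
          rw [LinearMap.mem_ker, Matrix.mulVecLin_apply, ← hy, hy0]
        rw [hker, Submodule.mem_bot] at hxker
        exact hx0 hxker
      have hone : (Nᵀ * N).det = 1 := by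
        have hall : ∀ z : ZMod 2, z ≠ 0 → z = 1 := by decide
        exact hall _ hdetne
      rw [hone, hncast]
  · intro hT
    have hobt : ∃ x : S → ZMod 2, x ≠ 0 ∧ N.mulVec x = 0 := by
      by_cases hc : HS.Connected
      · have hcyc : ¬ HS.IsAcyclic := fun ha => hT ⟨hc, ha⟩
        unfold SimpleGraph.IsAcyclic at hcyc
        push_neg at hcyc
        obtain ⟨v, c, hcy⟩ := hcyc
        refine exists_ker_of_cycle S ?_ hcy
        intro q hq
        rw [hHS, SimpleGraph.edgeSet_fromEdgeSet] at hq
        obtain ⟨hq1, hq2⟩ := hq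
        simp only [Finset.coe_image, Set.mem_image, Finset.mem_coe] at hq1
        obtain ⟨e, heS, he⟩ := hq1
        exact ⟨⟨e, heS⟩, he⟩
      · have hpc : ¬ HS.Preconnected := fun h => hc ⟨h⟩
        exact exists_ker_of_not_preconnected S hadj2 hcard hpc
    obtain ⟨x, hx0, hx⟩ := hobt
    exact hdet0 x hx0 (by rw [hNtop x, hx, Matrix.mulVec_zero])
end

section
/- Let G be a connected unicyclic graph such that the adjacency matrix of the line graph of G has nullity exactly 2. Then the length of the unique cycle of G is divisible by 4. -/
open SimpleGraph Matrix

open Classical in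
/-- The adjacency matrix of the line graph of `G`. -/
noncomputable def lineAdjMat {V : Type*} [Fintype V] [DecidableEq V] (G : SimpleGraph V)
    [Fintype G.edgeSet] : Matrix G.edgeSet G.edgeSet ℝ :=
  fun e f => if G.lineGraph.Adj e f then 1 else 0

namespace UnicyclicAux

open Finset

attribute [-instance] SimpleGraph.instDecidableRelAdjDeleteEdgesOfDecidablePredSym2MemSetOfDecidableEq

variable {V : Type*} [Fintype V] [DecidableEq V]

open Classical in
/-- degree with classical decidability -/
noncomputable def dg (G : SimpleGraph V) (v : V) : ℕ :=
  (Finset.univ.filter (fun u => G.Adj v u)).card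

open Classical in
/-- the row functional of the decorated vertex system -/
noncomputable def rowMap (G : SimpleGraph V) (δ : V → ℚ) (v : V) : (V → ℝ) →ₗ[ℝ] ℝ where
  toFun s := (∑ u, if G.Adj v u then s u else 0) + (((dg G v : ℝ) - 2) + (δ v : ℝ)) * s v
  map_add' x y := by
    have h : (∑ u, if G.Adj v u then x u + y u else 0)
        = (∑ u, if G.Adj v u then x u else 0) + (∑ u, if G.Adj v u then y u else 0) := by
      rw [← Finset.sum_add_distrib]
      exact Finset.sum_congr rfl fun u _ => by by_cases hh : G.Adj v u <;> simp [hh]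
    simp only [Pi.add_apply]
    rw [h]; ring
  map_smul' c x := by
    have h : (∑ u, if G.Adj v u then c * x u else 0)
        = c * (∑ u, if G.Adj v u then x u else 0) := by
      rw [Finset.mul_sum]
      exact Finset.sum_congr rfl fun u _ => by by_cases hh : G.Adj v u <;> simp [hh]
    simp only [Pi.smul_apply, smul_eq_mul, RingHom.id_apply]
    rw [h]; ring

noncomputable def Kspace (G : SimpleGraph V) (δ : V → ℚ) : Submodule ℝ (V → ℝ) :=
  ⨅ v, LinearMap.ker (rowMap G δ v)

open Classical in
lemma mem_Kspace {G : SimpleGraph V} {δ : V → ℚ} {s : V → ℝ} :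
    s ∈ Kspace G δ ↔ ∀ v,
      (∑ u, if G.Adj v u then s u else 0) + (((dg G v : ℝ) - 2) + (δ v : ℝ)) * s v = 0 := by
  simp [Kspace, Submodule.mem_iInf, LinearMap.mem_ker, rowMap, LinearMap.coe_mk, AddHom.coe_mk]

/-- transfer of finrank along mutually inverse linear maps between submodules -/
lemma finrank_eq_of_maps {R M N : Type*} [Field R] [AddCommGroup M] [Module R M]
    [AddCommGroup N] [Module R N]
    (A : Submodule R M) (B : Submodule R N) (F : M →ₗ[R] N) (G : N →ₗ[R] M)
    (hF : ∀ x ∈ A, F x ∈ B) (hG : ∀ y ∈ B, G y ∈ A)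
    (h1 : ∀ x ∈ A, G (F x) = x) (h2 : ∀ y ∈ B, F (G y) = y) :
    Module.finrank R A = Module.finrank R B := by
  refine LinearEquiv.finrank_eq (LinearEquiv.ofLinear (F.restrict hF) (G.restrict hG) ?_ ?_)
  · ext y
    simpa [LinearMap.restrict_apply, Subtype.ext_iff] using h2 y.1 y.2
  · ext x
    simpa [LinearMap.restrict_apply, Subtype.ext_iff] using h1 x.1 x.2

section WalkLemmas

variable {G : SimpleGraph V}

lemma getVert_eq_getD {u v : V} (p : G.Walk u v) (d : V) :
    ∀ i, i ≤ p.length → p.getVert i = p.support.getD i d := by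
  induction p with
  | nil =>
    intro i hi
    have : i = 0 := Nat.le_zero.mp hi
    subst this
    simp [SimpleGraph.Walk.getVert]
  | cons h q ih =>
    intro i hi
    cases i with
    | zero => simp [SimpleGraph.Walk.getVert]
    | succ n =>
      simp only [SimpleGraph.Walk.getVert_cons_succ, SimpleGraph.Walk.support_cons,
        List.getD_cons_succ]
      exact ih n (by simpa [SimpleGraph.Walk.length_cons, Nat.succ_le_succ_iff] using hi)

lemma path_getVert_inj {a b : V} {p : G.Walk a b} (hp : p.IsPath) {i j : ℕ}
    (hi : i ≤ p.length) (hj : j ≤ p.length) (h : p.getVert i = p.getVert j) : i = j := by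
  have hl := p.length_support
  rw [getVert_eq_getD p a i hi, getVert_eq_getD p a j hj,
    List.getD_eq_getElem _ _ (by omega), List.getD_eq_getElem _ _ (by omega)] at h
  exact (hp.support_nodup.getElem_inj_iff).mp h

lemma support_eq_cons' {u v : V} (p : G.Walk u v) : p.support = u :: p.support.tail := by
  cases p <;> simp [SimpleGraph.Walk.support]

lemma getVert_eq_tail_getD {v : V} (p : G.Walk v v) (d : V) (i : ℕ) (h1 : 1 ≤ i)
    (h2 : i ≤ p.length) : p.getVert i = p.support.tail.getD (i - 1) d := by
  rw [getVert_eq_getD p d i h2, support_eq_cons' p]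
  rcases Nat.exists_eq_add_of_le h1 with ⟨m, rfl⟩
  simp [Nat.add_comm 1 m]

lemma cycle_getVert_inj {v : V} {p : G.Walk v v} (hp : p.IsCycle) {i j : ℕ}
    (hi : i < p.length) (hj : j < p.length) (h : p.getVert i = p.getVert j) : i = j := by
  have hl := p.length_support
  have htl : p.support.tail.length = p.length := by
    rw [support_eq_cons' p] at hl; simpa using hl
  have key : ∀ m : ℕ, m < p.length →
      p.getVert m = p.support.tail.getD ((if m = 0 then p.length else m) - 1) v := by
    intro m hm
    by_cases hm0 : m = 0
    · subst hm0
      simp only [if_pos rfl]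
      have hh := getVert_eq_tail_getD p v p.length (by omega) le_rfl
      rw [SimpleGraph.Walk.getVert_length] at hh
      rw [SimpleGraph.Walk.getVert_zero]
      exact hh
    · rw [if_neg hm0]
      exact getVert_eq_tail_getD p v m (by omega) (by omega)
  rw [key i hi, key j hj] at h
  have h3 : 3 ≤ p.length := hp.three_le_length
  rw [List.getD_eq_getElem _ _ (by split_ifs <;> omega),
    List.getD_eq_getElem _ _ (by split_ifs <;> omega)] at h
  have := (hp.support_nodup.getElem_inj_iff).mp h
  split_ifs at this <;> omega

/-- the cyclic vertex enumeration of a closed walk -/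
noncomputable def cyc {v : V} (p : G.Walk v v) (j : ℕ) : V := p.getVert (j % p.length)

lemma cyc_zero {v : V} (p : G.Walk v v) : cyc p 0 = v := by
  simp [cyc, SimpleGraph.Walk.getVert_zero]

lemma cyc_add_length {v : V} (p : G.Walk v v) (j : ℕ) : cyc p (j + p.length) = cyc p j := by
  simp [cyc, Nat.add_mod_right]

lemma cyc_adj {v : V} {p : G.Walk v v} (hp : p.IsCycle) (j : ℕ) :
    G.Adj (cyc p j) (cyc p (j + 1)) := by
  have h3 : 3 ≤ p.length := hp.three_le_length
  have hn : 0 < p.length := by omega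
  have hr : j % p.length < p.length := Nat.mod_lt _ hn
  have hmod : (j + 1) % p.length = (j % p.length + 1) % p.length := by
    conv_lhs => rw [Nat.add_mod]
    rw [Nat.mod_eq_of_lt (show 1 < p.length by omega)]
  unfold cyc
  rcases Nat.lt_or_ge (j % p.length + 1) p.length with hlt | hge
  · rw [hmod, Nat.mod_eq_of_lt hlt]
    exact p.adj_getVert_succ hr
  · have he : j % p.length + 1 = p.length := by omega
    rw [hmod, he, Nat.mod_self]
    have := p.adj_getVert_succ (show p.length - 1 < p.length by omega)
    rw [show p.length - 1 + 1 = p.length by omega] at this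
    rw [SimpleGraph.Walk.getVert_length] at this
    rw [show j % p.length = p.length - 1 by omega, SimpleGraph.Walk.getVert_zero]
    exact this

lemma cyc_inj {v : V} {p : G.Walk v v} (hp : p.IsCycle) {i j : ℕ}
    (h : cyc p i = cyc p j) : i % p.length = j % p.length := by
  have h3 : 3 ≤ p.length := hp.three_le_length
  exact cycle_getVert_inj hp (Nat.mod_lt _ (by omega)) (Nat.mod_lt _ (by omega)) h

lemma cyc_mem_support {v : V} (p : G.Walk v v) (hp : 0 < p.length) (j : ℕ) :
    cyc p j ∈ p.support := by
  exact SimpleGraph.Walk.mem_support_iff_exists_getVert.mpr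
    ⟨j % p.length, rfl, le_of_lt (Nat.mod_lt _ hp)⟩

lemma mem_support_eq_cyc {v x : V} {p : G.Walk v v} (hp : p.IsCycle) (hx : x ∈ p.support) :
    ∃ j, x = cyc p j := by
  obtain ⟨i, hgv, hle⟩ := SimpleGraph.Walk.mem_support_iff_exists_getVert.mp hx
  rcases Nat.lt_or_ge i p.length with hlt | hge
  · exact ⟨i, by rw [← hgv]; simp [cyc, Nat.mod_eq_of_lt hlt]⟩
  · have : i = p.length := by omega
    subst this
    refine ⟨0, ?_⟩
    rw [← hgv, SimpleGraph.Walk.getVert_length]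
    simp [cyc, SimpleGraph.Walk.getVert_zero]

open Classical in
lemma dg_pair_le {x a b : V} (hxa : G.Adj x a) (hxb : G.Adj x b) (hab : a ≠ b) :
    2 ≤ dg G x := by
  have hsub : ({a, b} : Finset V) ⊆ Finset.univ.filter (fun u => G.Adj x u) := by
    intro y hy
    rcases Finset.mem_insert.mp hy with h | h
    · subst h; exact Finset.mem_filter.mpr ⟨Finset.mem_univ _, hxa⟩
    · rw [Finset.mem_singleton.mp h]; exact Finset.mem_filter.mpr ⟨Finset.mem_univ _, hxb⟩
  calc 2 = ({a, b} : Finset V).card := (Finset.card_pair hab).symm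
    _ ≤ _ := Finset.card_le_card hsub

lemma two_le_dg_of_mem_support {v x : V} {p : G.Walk v v} (hp : p.IsCycle)
    (hx : x ∈ p.support) : 2 ≤ dg G x := by
  have h3 : 3 ≤ p.length := hp.three_le_length
  obtain ⟨j, rfl⟩ := mem_support_eq_cyc hp hx
  have hj : cyc p j = cyc p (j + p.length) := (cyc_add_length p j).symm
  have hadj1 : G.Adj (cyc p j) (cyc p (j + p.length + 1)) := by
    rw [hj]; exact cyc_adj hp (j + p.length)
  have hadj2 : G.Adj (cyc p j) (cyc p (j + p.length - 1)) := by
    have := cyc_adj hp (j + p.length - 1)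
    rw [show j + p.length - 1 + 1 = j + p.length by omega, ← hj] at this
    exact this.symm
  refine dg_pair_le hadj1 hadj2 ?_
  intro hcontra
  have hmn := cyc_inj hp hcontra
  have hd : (p.length : ℤ) ∣ ((j + p.length - 1 : ℕ) : ℤ) - ((j + p.length + 1 : ℕ) : ℤ) :=
    (Nat.modEq_iff_dvd (n := p.length)).mp hmn
  have : ((j + p.length - 1 : ℕ) : ℤ) - ((j + p.length + 1 : ℕ) : ℤ) = -2 := by
    have : 1 ≤ j + p.length := by omega
    push_cast [Nat.cast_sub this]
    ring
  rw [this] at hd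
  have h2 : (p.length : ℤ) ∣ 2 := (dvd_neg.mp hd)
  have := Int.le_of_dvd (by norm_num) h2
  omega

lemma two_le_dg_interior {a b x : V} {p : G.Walk a b} (hp : p.IsPath)
    (hx : x ∈ p.support) (hxa : x ≠ a) (hxb : x ≠ b) : 2 ≤ dg G x := by
  obtain ⟨i, hgv, hle⟩ := SimpleGraph.Walk.mem_support_iff_exists_getVert.mp hx
  have hi0 : i ≠ 0 := by
    intro h; subst h; rw [SimpleGraph.Walk.getVert_zero] at hgv; exact hxa hgv.symm
  have hil : i ≠ p.length := by
    intro h; subst h; rw [SimpleGraph.Walk.getVert_length] at hgv; exact hxb hgv.symm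
  have hadj1 : G.Adj x (p.getVert (i + 1)) := by
    rw [← hgv]; exact p.adj_getVert_succ (by omega)
  have hadj2 : G.Adj x (p.getVert (i - 1)) := by
    rw [← hgv]
    have := p.adj_getVert_succ (i := i - 1) (by omega)
    rw [show i - 1 + 1 = i by omega] at this
    exact this.symm
  refine dg_pair_le hadj1 hadj2 ?_
  intro hcontra
  have := path_getVert_inj hp (by omega : i + 1 ≤ p.length) (by omega : i - 1 ≤ p.length) hcontra
  omega

end WalkLemmas

section Padic

lemma pnorm_two : padicNorm 2 2 = 1/2 := by
  have := padicNorm.padicNorm_p (p := 2) (by norm_num)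
  simpa [one_div] using this

lemma pnorm_int_le_one (z : ℤ) : padicNorm 2 (z : ℚ) ≤ 1 := padicNorm.of_int z

lemma pnorm_lt_one {d : ℚ} (hd : padicNorm 2 d ≤ 1/2) : padicNorm 2 d < 1 := by
  calc padicNorm 2 d ≤ 1/2 := hd
    _ < 1 := by norm_num

lemma pnorm_one_sub {d : ℚ} (hd : padicNorm 2 d ≤ 1/2) : padicNorm 2 (1 - d) = 1 := by
  have hne : padicNorm 2 (1 : ℚ) ≠ padicNorm 2 (-d) := by
    rw [padicNorm.neg, padicNorm.one]
    exact fun h => absurd (h ▸ pnorm_lt_one hd) (lt_irrefl _)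
  have := padicNorm.add_eq_max_of_ne hne
  rw [sub_eq_add_neg]
  rw [this, padicNorm.neg, padicNorm.one]
  exact max_eq_left (le_of_lt (pnorm_lt_one hd))

end Padic

/-- sum over an `if` equals sum over filter -/
lemma sum_if_filter {α : Type*} [Fintype α] (P : α → Prop) [DecidablePred P] (f : α → ℝ) :
    (∑ u, if P u then f u else 0) = ∑ u ∈ Finset.univ.filter P, f u :=
  (Finset.sum_filter _ _).symm

open Classical in
lemma dg_ne_zero_of_adj {G : SimpleGraph V} {x y : V} (h : G.Adj x y) : dg G x ≠ 0 :=
  Finset.card_ne_zero_of_mem (Finset.mem_filter.mpr ⟨Finset.mem_univ _, h⟩)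

open Classical in
lemma adj_of_mem_dg_filter {G : SimpleGraph V} {x y : V}
    (h : y ∈ Finset.univ.filter (fun u => G.Adj x u)) : G.Adj x y :=
  (Finset.mem_filter.mp h).2

open Classical in
lemma sum_dg (G : SimpleGraph V) [Fintype G.edgeSet] :
    ∑ x, dg G x = 2 * G.edgeFinset.card := by
  classical
  have h1 : ∀ x, dg G x = G.degree x := by
    intro x
    unfold dg
    have : (Finset.univ.filter (fun u => G.Adj x u) : Finset V) = G.neighborFinset x := by
      ext u; simp [SimpleGraph.mem_neighborFinset]
    rw [this]
    rfl
  rw [Finset.sum_congr rfl (fun x _ => h1 x)]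
  have := SimpleGraph.sum_degrees_eq_twice_card_edges G
  convert this using 2 <;> congr! <;> exact Subsingleton.elim _ _

open Classical in
lemma unique_nbr {G : SimpleGraph V} {v₀ u₀ : V} (hadj : G.Adj v₀ u₀) (hdg : dg G v₀ = 1) :
    ∀ y, G.Adj v₀ y → y = u₀ := by
  intro y hy
  obtain ⟨a, ha⟩ := Finset.card_eq_one.mp hdg
  have h1 : y ∈ Finset.univ.filter (fun u => G.Adj v₀ u) :=
    Finset.mem_filter.mpr ⟨Finset.mem_univ _, hy⟩
  have h2 : u₀ ∈ Finset.univ.filter (fun u => G.Adj v₀ u) :=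
    Finset.mem_filter.mpr ⟨Finset.mem_univ _, hadj⟩
  rw [ha] at h1 h2
  rw [Finset.mem_singleton.mp h1, Finset.mem_singleton.mp h2]

section Surgery

variable {G : SimpleGraph V} {v₀ u₀ : V}

open Classical in
lemma filter2_v0 (hadj : G.Adj v₀ u₀) (hdg : dg G v₀ = 1) :
    Finset.univ.filter (fun u => (G.deleteEdges {s(v₀,u₀)}).Adj v₀ u) = ∅ := by
  rw [Finset.filter_eq_empty_iff]
  intro y _ hy
  rw [SimpleGraph.deleteEdges_adj] at hy
  have := unique_nbr hadj hdg y hy.1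
  subst this
  exact hy.2 rfl

open Classical in
lemma filter2_u0 (hadj : G.Adj v₀ u₀) :
    Finset.univ.filter (fun u => (G.deleteEdges {s(v₀,u₀)}).Adj u₀ u)
      = (Finset.univ.filter (fun u => G.Adj u₀ u)).erase v₀ := by
  have hvu : v₀ ≠ u₀ := G.ne_of_adj hadj
  ext y
  simp only [Finset.mem_erase, Finset.mem_filter, Finset.mem_univ, true_and,
    SimpleGraph.deleteEdges_adj, Set.mem_singleton_iff]
  constructor
  · rintro ⟨ha, hb⟩
    refine ⟨fun h => hb ?_, ha⟩
    subst h
    rw [Sym2.eq_iff]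
    tauto
  · rintro ⟨hy, ha⟩
    refine ⟨ha, fun h => ?_⟩
    rw [Sym2.eq_iff] at h
    rcases h with ⟨h1, _⟩ | ⟨_, h2⟩
    · exact hvu h1.symm
    · exact hy h2

open Classical in
lemma filter2_other (hadj : G.Adj v₀ u₀) {x : V} (hx : x ≠ v₀) (hx' : x ≠ u₀)
    (hdg : dg G v₀ = 1) :
    Finset.univ.filter (fun u => (G.deleteEdges {s(v₀,u₀)}).Adj x u)
      = Finset.univ.filter (fun u => G.Adj x u) := by
  ext y
  simp only [Finset.mem_filter, Finset.mem_univ, true_and, SimpleGraph.deleteEdges_adj,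
    Set.mem_singleton_iff]
  constructor
  · exact fun h => h.1
  · intro h
    refine ⟨h, fun hc => ?_⟩
    rw [Sym2.eq_iff] at hc
    rcases hc with ⟨h1, _⟩ | ⟨_, h2⟩
    · exact hx h1
    · -- y = v₀, x adjacent to y, so x = u₀ by uniqueness applied to v₀
      subst h2
      exact hx' (unique_nbr hadj hdg x h.symm)

open Classical in
lemma dg2_v0 (hadj : G.Adj v₀ u₀) (hdg : dg G v₀ = 1) :
    dg (G.deleteEdges {s(v₀,u₀)}) v₀ = 0 := by
  unfold dg
  rw [show (Finset.univ.filter fun u => (G.deleteEdges {s(v₀,u₀)}).Adj v₀ u) = ∅ from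
    filter2_v0 hadj hdg]
  simp

open Classical in
lemma dg2_u0 (hadj : G.Adj v₀ u₀) :
    dg (G.deleteEdges {s(v₀,u₀)}) u₀ = dg G u₀ - 1 ∧ 1 ≤ dg G u₀ := by
  have hmem : v₀ ∈ Finset.univ.filter (fun u => G.Adj u₀ u) :=
    Finset.mem_filter.mpr ⟨Finset.mem_univ _, hadj.symm⟩
  constructor
  · unfold dg
    rw [show (Finset.univ.filter fun u => (G.deleteEdges {s(v₀,u₀)}).Adj u₀ u) =
      (Finset.univ.filter (fun u => G.Adj u₀ u)).erase v₀ from filter2_u0 hadj]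
    exact Finset.card_erase_of_mem hmem
  · have h := Finset.card_pos.mpr ⟨v₀, hmem⟩
    unfold dg
    omega

open Classical in
lemma dg2_other (hadj : G.Adj v₀ u₀) {x : V} (hx : x ≠ v₀) (hx' : x ≠ u₀)
    (hdg : dg G v₀ = 1) : dg (G.deleteEdges {s(v₀,u₀)}) x = dg G x := by
  unfold dg
  rw [filter2_other hadj hx hx' hdg]

end Surgery

/-- The cycle case: all positive degrees are `2`. -/
theorem cycleCase (G : SimpleGraph V) (δ : V → ℚ) (v : V) (w : G.Walk v v) (hw : w.IsCycle)
    (hδ : ∀ x, padicNorm 2 (δ x) ≤ 1/2)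
    (hdead : ∀ x, dg G x = 0 → δ x = 0)
    (hdeg2 : ∀ x, dg G x ≠ 0 → dg G x = 2)
    (hreach : ∀ x y, dg G x ≠ 0 → dg G y ≠ 0 → G.Reachable x y)
    (h6 : Module.finrank ℝ (Kspace G δ) = 2) : 4 ∣ w.length := by
  classical
  have h3 : 3 ≤ w.length := hw.three_le_length
  set n := w.length with hn
  set c : ℕ → V := cyc w with hc
  have hadjc : ∀ j, G.Adj (c j) (c (j+1)) := fun j => cyc_adj hw j
  have hdgc : ∀ j, dg G (c j) = 2 := fun j => hdeg2 _ (dg_ne_zero_of_adj (hadjc j))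
  have hne2 : ∀ j, c j ≠ c (j+2) := by
    intro j hcon
    have hmn : j % n = (j + 2) % n := cyc_inj hw hcon
    have hd : (n : ℤ) ∣ ((j + 2 : ℕ) : ℤ) - (j : ℤ) := (Nat.modEq_iff_dvd (n := n)).mp hmn
    have he : ((j + 2 : ℕ) : ℤ) - (j : ℤ) = 2 := by push_cast; ring
    rw [he] at hd
    have := Int.le_of_dvd (by norm_num) hd
    omega
  have hnbr : ∀ j, Finset.univ.filter (fun u => G.Adj (c (j+1)) u) = {c j, c (j+2)} := by
    intro j
    symm
    apply Finset.eq_of_subset_of_card_le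
    · intro y hy
      rcases Finset.mem_insert.mp hy with h | h
      · subst h; exact Finset.mem_filter.mpr ⟨Finset.mem_univ _, (hadjc j).symm⟩
      · rw [Finset.mem_singleton.mp h]
        refine Finset.mem_filter.mpr ⟨Finset.mem_univ _, ?_⟩
        have := hadjc (j+1)
        rwa [show j + 1 + 1 = j + 2 by omega] at this
    · rw [Finset.card_pair (hne2 j)]
      have h2 := hdgc (j+1)
      unfold dg at h2
      omega
  have heqn : ∀ s, s ∈ Kspace G δ → ∀ j,
      s (c (j+2)) = - s (c j) - (δ (c (j+1)) : ℝ) * s (c (j+1)) := by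
    intro s hs j
    have h := mem_Kspace.mp hs (c (j+1))
    rw [sum_if_filter, hnbr j, Finset.sum_pair (hne2 j), hdgc (j+1)] at h
    push_cast at h
    linarith
  have hc0 : dg G (c 0) ≠ 0 := dg_ne_zero_of_adj (hadjc 0)
  have hmemc : ∀ j, c j ∈ w.support := fun j => cyc_mem_support w (by omega) j
  have hsupmem : ∀ (a b : V) (p : G.Walk a b), a ∈ w.support → b ∈ w.support := by
    intro a b p
    induction p with
    | nil => exact id
    | @cons a x b h q ih =>
      intro ha
      apply ih
      obtain ⟨j, hj⟩ := mem_support_eq_cyc hw ha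
      rw [hj] at h
      have hcj : c j = c ((j + n - 1) + 1) := by
        rw [show (j + n - 1) + 1 = j + n by omega]
        exact (cyc_add_length w j).symm
      have hx : x ∈ Finset.univ.filter (fun u => G.Adj (c ((j + n - 1) + 1)) u) := by
        rw [← hcj]
        exact Finset.mem_filter.mpr ⟨Finset.mem_univ _, h⟩
      rw [hnbr (j + n - 1)] at hx
      rcases Finset.mem_insert.mp hx with h' | h'
      · rw [h']; exact hmemc _
      · rw [Finset.mem_singleton.mp h']; exact hmemc _
  have hzero : ∀ s, s ∈ Kspace G δ → s (c 0) = 0 → s (c 1) = 0 → s = 0 := by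
    intro s hs h0 h1
    have hcj : ∀ j, s (c j) = 0 := by
      intro j
      induction j using Nat.strong_induction_on with
      | _ j IHj =>
        rcases j with _ | j
        · exact h0
        rcases j with _ | j
        · exact h1
        show s (c (j + 2)) = 0
        rw [heqn s hs j, IHj j (by omega), IHj (j+1) (by omega)]
        ring
    funext x
    show s x = 0
    by_cases hx : dg G x = 0
    · have h := mem_Kspace.mp hs x
      have hfe : Finset.univ.filter (fun u => G.Adj x u) = ∅ := Finset.card_eq_zero.mp hx
      rw [sum_if_filter, hfe, hx, hdead x hx] at h
      simp at h
      linarith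
    · obtain ⟨p⟩ := hreach (c 0) x hc0 hx
      have hxsup : x ∈ w.support := hsupmem _ _ p (hmemc 0)
      obtain ⟨j, hj⟩ := mem_support_eq_cyc hw hxsup
      rw [hj]
      exact hcj j
  -- surjectivity of the boundary-value map
  set φ : ↥(Kspace G δ) →ₗ[ℝ] ℝ × ℝ :=
    { toFun := fun s => (s.1 (c 0), s.1 (c 1)),
      map_add' := by intro a b; simp
      map_smul' := by intro r a; simp } with hφ
  have hφinj : Function.Injective φ := by
    refine (injective_iff_map_eq_zero φ).mpr ?_
    intro a ha
    have h0 : a.1 (c 0) = 0 := congrArg Prod.fst ha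
    have h1 : a.1 (c 1) = 0 := congrArg Prod.snd ha
    exact Subtype.ext (hzero a.1 a.2 h0 h1)
  have hfr : Module.finrank ℝ (ℝ × ℝ) = 2 := by
    rw [Module.finrank_prod, Module.finrank_self]
  have hsurj : Function.Surjective φ :=
    (LinearMap.injective_iff_surjective_of_finrank_eq_finrank (by rw [h6, hfr])).mp hφinj
  obtain ⟨σ₀, hσ₀⟩ := hsurj (1, 0)
  have hs : (σ₀ : V → ℝ) ∈ Kspace G δ := σ₀.2
  have hs0 : (σ₀ : V → ℝ) (c 0) = 1 := congrArg Prod.fst hσ₀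
  have hs1 : (σ₀ : V → ℝ) (c 1) = 0 := congrArg Prod.snd hσ₀
  -- the rational solution of the recurrence
  let ρ : ℕ → ℚ × ℚ := fun j =>
    Nat.rec ((1:ℚ), (0:ℚ)) (fun m p => (p.2, -p.1 - δ (c (m+1)) * p.2)) j
  let τ : ℕ → ℚ := fun j => (ρ j).1
  have hτ0 : τ 0 = 1 := rfl
  have hτ1 : τ 1 = 0 := rfl
  have hτrec : ∀ m, τ (m+2) = - τ m - δ (c (m+1)) * τ (m+1) := fun m => rfl
  have hlink : ∀ j, (τ j : ℝ) = (σ₀ : V → ℝ) (c j) := by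
    intro j
    induction j using Nat.strong_induction_on with
    | _ j IHj =>
      rcases j with _ | j
      · show ((τ 0 : ℚ) : ℝ) = (σ₀ : V → ℝ) (c 0)
        rw [hτ0, hs0]; norm_num
      rcases j with _ | j
      · show ((τ 1 : ℚ) : ℝ) = (σ₀ : V → ℝ) (c 1)
        rw [hτ1, hs1]; norm_num
      show ((τ (j+2) : ℚ) : ℝ) = (σ₀ : V → ℝ) (c (j+2))
      rw [hτrec j, heqn _ hs j, ← IHj j (by omega), ← IHj (j+1) (by omega)]
      push_cast
      ring
  have hint : ∀ j, padicNorm 2 (τ j) ≤ 1 := by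
    intro j
    induction j using Nat.strong_induction_on with
    | _ j IHj =>
      rcases j with _ | j
      · show padicNorm 2 (τ 0) ≤ 1
        rw [hτ0, padicNorm.one]
      rcases j with _ | j
      · show padicNorm 2 (τ 1) ≤ 1
        rw [hτ1, padicNorm.zero]; norm_num
      show padicNorm 2 (τ (j+2)) ≤ 1
      rw [hτrec j]
      have hmax : padicNorm 2 (- τ j - δ (c (j+1)) * τ (j+1))
          ≤ max (padicNorm 2 (- τ j)) (padicNorm 2 (- (δ (c (j+1)) * τ (j+1)))) := by
        have := padicNorm.nonarchimedean (p := 2) (q := - τ j)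
          (r := - (δ (c (j+1)) * τ (j+1)))
        simpa [sub_eq_add_neg] using this
      refine hmax.trans (max_le ?_ ?_)
      · rw [padicNorm.neg]; exact IHj j (by omega)
      · rw [padicNorm.neg, padicNorm.mul]
        calc padicNorm 2 (δ (c (j+1))) * padicNorm 2 (τ (j+1))
            ≤ 1 * 1 := by
              apply mul_le_mul ((hδ _).trans (by norm_num)) (IHj (j+1) (by omega))
                (padicNorm.nonneg _) (by norm_num)
          _ = 1 := by norm_num
  have hpar : ∀ m, padicNorm 2 (τ (2*m) - (-1)^m) ≤ 1/4 ∧ padicNorm 2 (τ (2*m+1)) ≤ 1/2 := by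
    intro m
    induction m with
    | zero =>
      constructor
      · rw [show 2*0 = 0 by ring, hτ0]
        norm_num [padicNorm.zero]
      · rw [show 2*0+1 = 1 by ring, hτ1, padicNorm.zero]
        norm_num
    | succ m ih =>
      obtain ⟨ihA, ihB⟩ := ih
      have hprod : padicNorm 2 (δ (c (2*m+1)) * τ (2*m+1)) ≤ 1/4 := by
        rw [padicNorm.mul]
        calc padicNorm 2 (δ (c (2*m+1))) * padicNorm 2 (τ (2*m+1))
            ≤ (1/2) * (1/2) := by
              apply mul_le_mul (hδ _) ihB (padicNorm.nonneg _) (by norm_num)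
          _ = 1/4 := by norm_num
      have hprod2 : padicNorm 2 (δ (c (2*m+2)) * τ (2*m+2)) ≤ 1/2 := by
        rw [padicNorm.mul]
        calc padicNorm 2 (δ (c (2*m+2))) * padicNorm 2 (τ (2*m+2))
            ≤ (1/2) * 1 := by
              apply mul_le_mul (hδ _) (hint (2*m+2)) (padicNorm.nonneg _) (by norm_num)
          _ = 1/2 := by norm_num
      have hA : padicNorm 2 (τ (2*(m+1)) - (-1)^(m+1)) ≤ 1/4 := by
        have hidx : 2*(m+1) = (2*m+1) + 1 := by ring
        have he : τ (2*(m+1)) - (-1)^(m+1)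
            = - (τ (2*m) - (-1)^m) - δ (c (2*m+1)) * τ (2*m+1) := by
          rw [show 2*(m+1) = 2*m + 2 by ring, hτrec (2*m), pow_succ]
          ring
        rw [he]
        have hmax : padicNorm 2 (- (τ (2*m) - (-1)^m) - δ (c (2*m+1)) * τ (2*m+1))
            ≤ max (padicNorm 2 (- (τ (2*m) - (-1)^m)))
              (padicNorm 2 (- (δ (c (2*m+1)) * τ (2*m+1)))) := by
          have := padicNorm.nonarchimedean (p := 2) (q := - (τ (2*m) - (-1)^m))
            (r := - (δ (c (2*m+1)) * τ (2*m+1)))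
          simpa [sub_eq_add_neg] using this
        refine hmax.trans (max_le ?_ ?_)
        · rw [padicNorm.neg]; exact ihA
        · rw [padicNorm.neg]; exact hprod
      refine ⟨hA, ?_⟩
      have he : τ (2*(m+1)+1) = - τ (2*m+1) - δ (c (2*m+2)) * τ (2*m+2) := by
        rw [show 2*(m+1)+1 = (2*m+1) + 2 by ring, hτrec (2*m+1)]
      rw [he]
      have hmax : padicNorm 2 (- τ (2*m+1) - δ (c (2*m+2)) * τ (2*m+2))
          ≤ max (padicNorm 2 (- τ (2*m+1)))
            (padicNorm 2 (- (δ (c (2*m+2)) * τ (2*m+2)))) := by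
        have := padicNorm.nonarchimedean (p := 2) (q := - τ (2*m+1))
          (r := - (δ (c (2*m+2)) * τ (2*m+2)))
        simpa [sub_eq_add_neg] using this
      refine hmax.trans (max_le ?_ ?_)
      · rw [padicNorm.neg]; exact ihB
      · rw [padicNorm.neg]; exact hprod2
  have hcn : c n = c 0 := by
    rw [hc]
    unfold cyc
    rw [← hn, Nat.mod_self, Nat.zero_mod]
  have hτn : τ n = 1 := by
    have hr : (τ n : ℝ) = 1 := by rw [hlink n, hcn, hs0]
    exact_mod_cast hr
  rcases Nat.even_or_odd n with he | ho
  · obtain ⟨m, hm⟩ := he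
    have hm2 : n = 2*m := by omega
    have hA := (hpar m).1
    rw [← hm2, hτn] at hA
    rcases Nat.even_or_odd m with hme | hmo
    · obtain ⟨t, ht⟩ := hme
      exact ⟨t, by omega⟩
    · exfalso
      have hpow : ((-1:ℚ))^m = -1 := Odd.neg_one_pow hmo
      rw [hpow, show (1:ℚ) - (-1) = 2 by norm_num, pnorm_two] at hA
      norm_num at hA
  · exfalso
    obtain ⟨m, hm⟩ := ho
    have hB := (hpar m).2
    rw [← hm, hτn, padicNorm.one] at hB
    norm_num at hB

/-- The key elimination step at a pendant vertex. -/
theorem Kspace_step (G : SimpleGraph V) (δ : V → ℚ) (v₀ u₀ : V) (hadj : G.Adj v₀ u₀)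
    (hdg : dg G v₀ = 1) (hδ : ∀ x, padicNorm 2 (δ x) ≤ 1/2) :
    Module.finrank ℝ (Kspace (G.deleteEdges {s(v₀,u₀)})
      (fun x => if x = v₀ then 0 else if x = u₀ then δ u₀ + 1 + (1 - δ v₀)⁻¹ else δ x))
      = Module.finrank ℝ (Kspace G δ) := by
  classical
  have hvu : v₀ ≠ u₀ := G.ne_of_adj hadj
  have hd0 : (1:ℚ) - δ v₀ ≠ 0 := by
    intro h
    have := pnorm_one_sub (hδ v₀)
    rw [h, padicNorm.zero] at this
    norm_num at this
  have hd0R : (1:ℝ) - (δ v₀ : ℝ) ≠ 0 := by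
    intro h
    apply hd0
    have : ((1 - δ v₀ : ℚ) : ℝ) = 0 := by push_cast; linarith
    exact_mod_cast this
  set α : ℝ := ((1:ℝ) - (δ v₀ : ℝ))⁻¹ with hα
  have hcanc : ((1:ℝ) - (δ v₀ : ℝ)) * α = 1 := mul_inv_cancel₀ hd0R
  have hαcast : ((( 1 - δ v₀)⁻¹ : ℚ) : ℝ) = α := by
    rw [hα]; push_cast; ring
  set G₂ := G.deleteEdges {s(v₀,u₀)} with hG₂
  set δ' : V → ℚ := fun x => if x = v₀ then 0 else if x = u₀ then
    δ u₀ + 1 + (1 - δ v₀)⁻¹ else δ x with hδ'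
  have hδ'v : δ' v₀ = 0 := by simp [hδ']
  have hδ'u : δ' u₀ = δ u₀ + 1 + (1 - δ v₀)⁻¹ := by simp [hδ', hvu.symm]
  have hδ'o : ∀ x, x ≠ v₀ → x ≠ u₀ → δ' x = δ x := by
    intro x hx hx'; simp [hδ', hx, hx']
  have hdgother : ∀ x, x ≠ v₀ → x ≠ u₀ → dg G₂ x = dg G x :=
    fun x hx hx' => dg2_other hadj hx hx' hdg
  have hdgv : dg G₂ v₀ = 0 := dg2_v0 hadj hdg
  have hdgu := dg2_u0 (v₀ := v₀) hadj
  have hfv : Finset.univ.filter (fun u => G.Adj v₀ u) = {u₀} := by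
    apply Finset.eq_singleton_iff_unique_mem.mpr
    exact ⟨Finset.mem_filter.mpr ⟨Finset.mem_univ _, hadj⟩,
      fun y hy => unique_nbr hadj hdg y (Finset.mem_filter.mp hy).2⟩
  have hfv2 := filter2_v0 hadj hdg
  have hfu2 := filter2_u0 (v₀ := v₀) hadj
  have hfo2 : ∀ x, x ≠ v₀ → x ≠ u₀ → Finset.univ.filter (fun u => G₂.Adj x u)
      = Finset.univ.filter (fun u => G.Adj x u) :=
    fun x hx hx' => filter2_other hadj hx hx' hdg
  have hvnotin : ∀ x, x ≠ v₀ → x ≠ u₀ → v₀ ∉ Finset.univ.filter (fun u => G.Adj x u) := by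
    intro x hx hx' hmem
    exact hx' (unique_nbr hadj hdg x ((Finset.mem_filter.mp hmem).2).symm)
  set Fm : (V → ℝ) →ₗ[ℝ] (V → ℝ) :=
    { toFun := fun t x => if x = v₀ then α * t u₀ else t x,
      map_add' := by intro a b; funext x; by_cases h : x = v₀ <;> simp [h, mul_add]
      map_smul' := by
        intro c a; funext x
        by_cases h : x = v₀ <;> simp [h] <;> ring } with hFm
  set Gm : (V → ℝ) →ₗ[ℝ] (V → ℝ) :=
    { toFun := fun s x => if x = v₀ then 0 else s x,
      map_add' := by intro a b; funext x; by_cases h : x = v₀ <;> simp [h]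
      map_smul' := by intro c a; funext x; by_cases h : x = v₀ <;> simp [h] } with hGm
  have hFapp : ∀ t x, Fm t x = if x = v₀ then α * t u₀ else t x := fun t x => rfl
  have hGapp : ∀ s x, Gm s x = if x = v₀ then 0 else s x := fun s x => rfl
  -- every member of the new space vanishes at v₀
  have htv0 : ∀ t, t ∈ Kspace G₂ δ' → t v₀ = 0 := by
    intro t ht
    have h := mem_Kspace.mp ht v₀
    rw [sum_if_filter, hfv2] at h
    rw [hdgv, hδ'v] at h
    simp at h
    linarith
  -- members of the old space satisfy s v₀ = α * s u₀
  have hsv0 : ∀ s, s ∈ Kspace G δ → s v₀ = α * s u₀ := by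
    intro s hs
    have h := mem_Kspace.mp hs v₀
    rw [sum_if_filter, hfv, Finset.sum_singleton, hdg] at h
    -- h : s u₀ + ((1:ℝ) - 2 + δ v₀) * s v₀ = 0
    have : ((1:ℝ) - (δ v₀ : ℝ)) * s v₀ = s u₀ := by push_cast at h; linarith
    calc s v₀ = (((1:ℝ) - (δ v₀:ℝ)) * α) * s v₀ := by rw [hcanc]; ring
      _ = α * (((1:ℝ) - (δ v₀:ℝ)) * s v₀) := by ring
      _ = α * s u₀ := by rw [this]
  have hF : ∀ t ∈ Kspace G₂ δ', Fm t ∈ Kspace G δ := by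
    intro t ht
    have htv := htv0 t ht
    apply mem_Kspace.mpr
    intro x
    rw [sum_if_filter]
    by_cases hx : x = v₀
    · subst hx
      rw [hfv, Finset.sum_singleton, hdg]
      rw [hFapp, hFapp, if_neg hvu.symm, if_pos rfl]
      push_cast
      linear_combination (- t u₀) * hcanc
    by_cases hxu : x = u₀
    · subst hxu
      have hvmem : v₀ ∈ Finset.univ.filter (fun u => G.Adj x u) :=
        Finset.mem_filter.mpr ⟨Finset.mem_univ _, hadj.symm⟩
      rw [← Finset.add_sum_erase _ _ hvmem]
      have herase : ∑ y ∈ (Finset.univ.filter (fun u => G.Adj x u)).erase v₀, Fm t y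
          = ∑ y ∈ (Finset.univ.filter (fun u => G.Adj x u)).erase v₀, t y :=
        Finset.sum_congr rfl (fun y hy => by
          rw [hFapp, if_neg (Finset.mem_erase.mp hy).1])
      rw [herase, ← hfu2]
      have h2 := mem_Kspace.mp ht x
      rw [sum_if_filter] at h2
      rw [hδ'u] at h2
      have hcast : (dg G₂ x : ℝ) = (dg G x : ℝ) - 1 := by
        rw [hdgu.1, Nat.cast_sub hdgu.2]; norm_num
      rw [hcast] at h2
      rw [hFapp, if_pos rfl, hFapp, if_neg hvu.symm]
      push_cast at h2 ⊢
      rw [← hα] at h2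
      linear_combination h2
    · have h2 := mem_Kspace.mp ht x
      rw [sum_if_filter, hfo2 x hx hxu, hdgother x hx hxu, hδ'o x hx hxu] at h2
      have hsame : ∑ y ∈ Finset.univ.filter (fun u => G.Adj x u), Fm t y
          = ∑ y ∈ Finset.univ.filter (fun u => G.Adj x u), t y :=
        Finset.sum_congr rfl (fun y hy => by
          rw [hFapp, if_neg]
          intro hyv
          subst hyv
          exact hvnotin x hx hxu hy)
      rw [hsame, hFapp, if_neg hx]
      exact h2
  have hG : ∀ s ∈ Kspace G δ, Gm s ∈ Kspace G₂ δ' := by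
    intro s hs
    have hsv := hsv0 s hs
    apply mem_Kspace.mpr
    intro x
    rw [sum_if_filter]
    by_cases hx : x = v₀
    · subst hx
      rw [hfv2]
      rw [hdgv, hδ'v, hGapp, if_pos rfl]
      simp
    by_cases hxu : x = u₀
    · subst hxu
      rw [hfu2]
      have herase : ∑ y ∈ (Finset.univ.filter (fun u => G.Adj x u)).erase v₀, Gm s y
          = ∑ y ∈ (Finset.univ.filter (fun u => G.Adj x u)).erase v₀, s y :=
        Finset.sum_congr rfl (fun y hy => by
          rw [hGapp, if_neg (Finset.mem_erase.mp hy).1])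
      rw [herase]
      have hvmem : v₀ ∈ Finset.univ.filter (fun u => G.Adj x u) :=
        Finset.mem_filter.mpr ⟨Finset.mem_univ _, hadj.symm⟩
      have hsplit := Finset.add_sum_erase _ s hvmem
      have h2 := mem_Kspace.mp hs x
      rw [sum_if_filter] at h2
      have hcast : (dg G₂ x : ℝ) = (dg G x : ℝ) - 1 := by
        rw [hdgu.1, Nat.cast_sub hdgu.2]; norm_num
      rw [hcast, hδ'u, hGapp, if_neg hvu.symm]
      push_cast
      rw [← hα]
      push_cast at h2
      rw [← hsplit] at h2
      linear_combination h2 - hsv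
    · rw [hfo2 x hx hxu]
      have hsame : ∑ y ∈ Finset.univ.filter (fun u => G.Adj x u), Gm s y
          = ∑ y ∈ Finset.univ.filter (fun u => G.Adj x u), s y :=
        Finset.sum_congr rfl (fun y hy => by
          rw [hGapp, if_neg]
          intro hyv
          subst hyv
          exact hvnotin x hx hxu hy)
      rw [hsame, hGapp, if_neg hx, hdgother x hx hxu, hδ'o x hx hxu]
      have h2 := mem_Kspace.mp hs x
      rw [sum_if_filter] at h2
      exact h2
  refine finrank_eq_of_maps _ _ Fm Gm ?_ ?_ ?_ ?_
  · exact hF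
  · exact hG
  · intro t ht
    funext x
    rw [hGapp]
    by_cases hx : x = v₀
    · subst hx
      rw [if_pos rfl, htv0 t ht]
    · rw [if_neg hx, hFapp, if_neg hx]
  · intro s hs
    funext x
    rw [hFapp]
    by_cases hx : x = v₀
    · subst hx
      rw [if_pos rfl, hGapp, if_neg hvu.symm, ← hsv0 s hs]
    · rw [if_neg hx, hGapp, if_neg hx]

/-- Main induction. -/
theorem aux (k : ℕ) (G : SimpleGraph V) [Fintype G.edgeSet] (δ : V → ℚ) (v : V)
    (w : G.Walk v v)
    (h1 : w.IsCycle)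
    (h2 : Fintype.card G.edgeSet = k)
    (h3 : (Finset.univ.filter (fun x => dg G x ≠ 0)).card = k)
    (h4 : ∀ x y, dg G x ≠ 0 → dg G y ≠ 0 → G.Reachable x y)
    (h4' : ∀ x, dg G x = 0 → δ x = 0)
    (h5 : ∀ x, padicNorm 2 (δ x) ≤ 1/2)
    (h6 : Module.finrank ℝ (Kspace G δ) = 2) : 4 ∣ w.length := by
  induction k using Nat.strong_induction_on generalizing G δ v w with
  | _ k IH =>
  classical
  by_cases hleaf : ∃ v₀, dg G v₀ = 1
  · obtain ⟨v₀, hv₀⟩ := hleaf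
    obtain ⟨u₀, hu₀mem⟩ : ∃ u₀, G.Adj v₀ u₀ := by
      have hpos : 0 < (Finset.univ.filter (fun u => G.Adj v₀ u)).card := by
        have h := hv₀
        unfold dg at h
        omega
      obtain ⟨u, hu⟩ := Finset.card_pos.mp hpos
      exact ⟨u, adj_of_mem_dg_filter hu⟩
    have hvu : v₀ ≠ u₀ := G.ne_of_adj hu₀mem
    have hv₀w : v₀ ∉ w.support := by
      intro hmem
      have := two_le_dg_of_mem_support h1 hmem
      omega
    -- u₀ has degree at least 2
    have hvsup : dg G v ≠ 0 := by
      have := two_le_dg_of_mem_support h1 (w.start_mem_support)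
      omega
    have hu₀2 : 2 ≤ dg G u₀ := by
      by_contra hcon
      have hd1 : dg G u₀ = 1 := by
        have := dg_ne_zero_of_adj hu₀mem.symm
        omega
      have huv : u₀ ≠ v := by
        intro h; subst h
        have := two_le_dg_of_mem_support h1 (w.start_mem_support)
        omega
      obtain ⟨p⟩ := h4 u₀ v (by omega) hvsup
      have hip : p.toPath.1.IsPath := p.toPath.2
      have hnn : ¬ (p.toPath.1).Nil := by
        intro hn
        rw [SimpleGraph.Walk.nil_iff_length_eq] at hn
        have : (p.toPath.1).getVert (p.toPath.1).length = v := SimpleGraph.Walk.getVert_length _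
        rw [hn, SimpleGraph.Walk.getVert_zero] at this
        exact huv this
      have hadj1 : G.Adj u₀ ((p.toPath.1).getVert 1) := SimpleGraph.Walk.adj_snd hnn
      have hgv1 : (p.toPath.1).getVert 1 = v₀ := unique_nbr hu₀mem.symm hd1 _ hadj1
      have hlen : 0 < (p.toPath.1).length := SimpleGraph.Walk.not_nil_iff_lt_length.mp hnn
      have hle1 : 1 ≤ (p.toPath.1).length := hlen
      have hv₀mem : v₀ ∈ (p.toPath.1).support := by
        rw [← hgv1]
        exact SimpleGraph.Walk.mem_support_iff_exists_getVert.mpr ⟨1, rfl, hle1⟩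
      have hne_u : v₀ ≠ u₀ := hvu
      have hne_v : v₀ ≠ v := by
        intro h
        have h2v := two_le_dg_of_mem_support h1 w.start_mem_support
        rw [h] at hv₀
        omega
      have := two_le_dg_interior hip hv₀mem hne_u hne_v
      omega
    set G₂ := G.deleteEdges {s(v₀,u₀)} with hG₂def
    haveI : Fintype G₂.edgeSet := Fintype.ofFinite _
    have hd2u := dg2_u0 (G := G) (v₀ := v₀) (u₀ := u₀) hu₀mem
    have hd2v := dg2_v0 hu₀mem hv₀
    -- edge sets
    have he₀ : s(v₀,u₀) ∈ G.edgeFinset := by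
      rw [SimpleGraph.mem_edgeFinset]
      exact hu₀mem
    have hef : G₂.edgeFinset = G.edgeFinset.erase (s(v₀,u₀)) := by
      ext e
      rw [SimpleGraph.mem_edgeFinset, Finset.mem_erase, SimpleGraph.mem_edgeFinset]
      rw [hG₂def, SimpleGraph.edgeSet_deleteEdges]
      simp [and_comm]
    have hk1 : 1 ≤ k := by
      rw [← h3]
      refine Finset.card_pos.mpr ⟨v₀, Finset.mem_filter.mpr ⟨Finset.mem_univ _, by omega⟩⟩
    have h2₂ : Fintype.card G₂.edgeSet = k - 1 := by
      rw [← SimpleGraph.edgeFinset_card, hef, Finset.card_erase_of_mem he₀,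
        SimpleGraph.edgeFinset_card, h2]
    -- support filter
    have hsupp2 : ∀ x, dg G₂ x ≠ 0 ↔ (dg G x ≠ 0 ∧ x ≠ v₀) := by
      intro x
      rcases eq_or_ne x v₀ with rfl | hxv
      · simp [hG₂def, hd2v]
      rcases eq_or_ne x u₀ with rfl | hxu
      · constructor
        · intro _; exact ⟨by omega, hxv⟩
        · intro _; rw [hd2u.1]; omega
      · rw [dg2_other hu₀mem hxv hxu hv₀]
        exact ⟨fun h => ⟨h, hxv⟩, fun h => h.1⟩
    have h3₂ : (Finset.univ.filter (fun x => dg G₂ x ≠ 0)).card = k - 1 := by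
      have : (Finset.univ.filter (fun x => dg G₂ x ≠ 0))
          = (Finset.univ.filter (fun x => dg G x ≠ 0)).erase v₀ := by
        ext x
        simp only [Finset.mem_filter, Finset.mem_univ, true_and, Finset.mem_erase]
        rw [hsupp2 x]
        tauto
      rw [this, Finset.card_erase_of_mem (Finset.mem_filter.mpr
        ⟨Finset.mem_univ _, by omega⟩), h3]
    -- reachability
    have h4₂ : ∀ x y, dg G₂ x ≠ 0 → dg G₂ y ≠ 0 → G₂.Reachable x y := by
      intro x y hx hy
      obtain ⟨hxG, hxv⟩ := (hsupp2 x).mp hx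
      obtain ⟨hyG, hyv⟩ := (hsupp2 y).mp hy
      obtain ⟨p⟩ := h4 x y hxG hyG
      have hq : v₀ ∉ p.toPath.1.support := by
        intro hmem
        rcases eq_or_ne v₀ x with rfl | hnex
        · exact hxv rfl
        rcases eq_or_ne v₀ y with rfl | hney
        · exact hyv rfl
        have := two_le_dg_interior p.toPath.2 hmem hnex hney
        omega
      have hedges : ∀ e ∈ p.toPath.1.edges, e ∉ ({s(v₀,u₀)} : Set (Sym2 V)) := by
        intro e he hee
        rw [Set.mem_singleton_iff] at hee
        subst hee
        exact hq (SimpleGraph.Walk.fst_mem_support_of_mem_edges _ he)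
      exact ⟨(p.toPath.1).toDeleteEdges _ hedges⟩
    -- the new decoration
    set δ' : V → ℚ := fun x => if x = v₀ then 0 else if x = u₀ then
      δ u₀ + 1 + (1 - δ v₀)⁻¹ else δ x with hδ'def
    have h4'₂ : ∀ y, dg G₂ y = 0 → δ' y = 0 := by
      intro y hy
      by_cases hyv : y = v₀
      · simp [hδ'def, hyv]
      by_cases hyu : y = u₀
      · exfalso; rw [hyu, hd2u.1] at hy; omega
      · have hval : δ' y = δ y := by simp [hδ'def, hyv, hyu]
        rw [hval]
        exact h4' y (by rw [← dg2_other hu₀mem hyv hyu hv₀]; exact hy)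
    have h5₂ : ∀ y, padicNorm 2 (δ' y) ≤ 1/2 := by
      intro y
      by_cases hyv : y = v₀
      · have hval : δ' y = 0 := by simp [hδ'def, hyv]
        rw [hval, padicNorm.zero]
        norm_num
      by_cases hyu : y = u₀
      · have hval : δ' y = δ u₀ + 1 + (1 - δ v₀)⁻¹ := by simp [hδ'def, hyu, hvu.symm]
        rw [hval]
        have hkey : padicNorm 2 (1 + (1 - δ v₀)⁻¹) ≤ 1/2 := by
          have hd0 : (1:ℚ) - δ v₀ ≠ 0 := by
            intro h
            have := pnorm_one_sub (h5 v₀)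
            rw [h, padicNorm.zero] at this
            norm_num at this
          have heq2 : (1:ℚ) + (1 - δ v₀)⁻¹ = (2 - δ v₀) / (1 - δ v₀) := by
            field_simp
            ring
          rw [heq2, padicNorm.div, pnorm_one_sub (h5 v₀), div_one]
          have hnn : padicNorm 2 (2 - δ v₀) ≤ max (padicNorm 2 2) (padicNorm 2 (- δ v₀)) := by
            have := padicNorm.nonarchimedean (p := 2) (q := 2) (r := - δ v₀)
            simpa [sub_eq_add_neg] using this
          rw [padicNorm.neg, pnorm_two] at hnn
          exact hnn.trans (max_le (le_refl _) (h5 v₀))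
        calc padicNorm 2 (δ u₀ + 1 + (1 - δ v₀)⁻¹)
            ≤ max (padicNorm 2 (δ u₀)) (padicNorm 2 (1 + (1 - δ v₀)⁻¹)) := by
              have := padicNorm.nonarchimedean (p := 2) (q := δ u₀) (r := 1 + (1 - δ v₀)⁻¹)
              simpa [add_assoc] using this
          _ ≤ 1/2 := max_le (h5 u₀) hkey
      · have hval : δ' y = δ y := by simp [hδ'def, hyv, hyu]
        rw [hval]
        exact h5 y
    have h6₂ : Module.finrank ℝ (Kspace G₂ δ') = 2 := by
      rw [hG₂def, hδ'def]
      rw [Kspace_step G δ v₀ u₀ hu₀mem hv₀ h5]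
      exact h6
    -- transfer the cycle
    have hwedges : ∀ e ∈ w.edges, e ∉ ({s(v₀,u₀)} : Set (Sym2 V)) := by
      intro e he hee
      rw [Set.mem_singleton_iff] at hee
      subst hee
      exact hv₀w (SimpleGraph.Walk.fst_mem_support_of_mem_edges _ he)
    have hlen2 : (w.toDeleteEdges {s(v₀,u₀)} hwedges).length = w.length :=
      SimpleGraph.Walk.length_transfer _ _
    have := IH (k-1) (by omega) G₂ δ' v (w.toDeleteEdges {s(v₀,u₀)} hwedges)
      (h1.toDeleteEdges (G := G) (s := {s(v₀,u₀)}) (hp := hwedges)) h2₂ h3₂ h4₂ h4'₂ h5₂ h6₂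
    rwa [hlen2] at this
  · -- no leaf: every nonzero degree is 2
    push_neg at hleaf
    apply cycleCase G δ v w h1 h5 h4' ?_ h4 h6
    intro x hx
    -- handshake: sum of degrees over support = 2k, each ≥ 2, k vertices
    have hsum : ∑ x, dg G x = 2 * k := by
      rw [sum_dg, SimpleGraph.edgeFinset_card, h2]
    have hsplit : ∑ x ∈ Finset.univ.filter (fun x => dg G x ≠ 0), dg G x = 2 * k := by
      rw [← hsum]
      apply Finset.sum_subset (Finset.filter_subset _ _)
      intro y _ hy
      simp only [Finset.mem_filter, Finset.mem_univ, true_and, not_not] at hy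
      exact hy
    have hge : ∀ y ∈ Finset.univ.filter (fun x => dg G x ≠ 0), 2 ≤ dg G y := by
      intro y hy
      have := (Finset.mem_filter.mp hy).2
      have := hleaf y
      omega
    by_contra hcon
    have hx2 : 3 ≤ dg G x := by
      have := hleaf x
      omega
    have hxmem : x ∈ Finset.univ.filter (fun x => dg G x ≠ 0) :=
      Finset.mem_filter.mpr ⟨Finset.mem_univ _, hx⟩
    have hlt : 2 * k < ∑ y ∈ Finset.univ.filter (fun x => dg G x ≠ 0), dg G y := by
      calc 2 * k = ∑ _y ∈ Finset.univ.filter (fun x => dg G x ≠ 0), 2 := by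
            rw [Finset.sum_const, h3]; ring
        _ < _ := by
            apply Finset.sum_lt_sum hge
            exact ⟨x, hxmem, by omega⟩
    omega

open Classical in
/-- extension of an edge function by zero -/
noncomputable def ext0 (G : SimpleGraph V) (x : G.edgeSet → ℝ) : Sym2 V → ℝ :=
  fun z => if hz : z ∈ G.edgeSet then x ⟨z, hz⟩ else 0

open Classical in
lemma ext0_adj {G : SimpleGraph V} (x : G.edgeSet → ℝ) {a b : V} (h : G.Adj a b) :
    ext0 G x s(a,b) = x ⟨s(a,b), G.mem_edgeSet.mpr h⟩ := dif_pos _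

open Classical in
lemma incidence_reindex {G : SimpleGraph V} [Fintype G.edgeSet] (x : G.edgeSet → ℝ) (vv : V) :
    (∑ f : G.edgeSet, if vv ∈ (f : Sym2 V) then x f else 0)
      = ∑ u, if G.Adj vv u then ext0 G x s(vv,u) else 0 := by
  rw [← Finset.sum_filter, ← Finset.sum_filter]
  refine Finset.sum_bij' (i := fun f hf => Sym2.Mem.other' ((Finset.mem_filter.mp hf).2))
    (j := fun u hu => (⟨s(vv,u), G.mem_edgeSet.mpr (Finset.mem_filter.mp hu).2⟩ : G.edgeSet))
    ?_ ?_ ?_ ?_ ?_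
  · intro f hf
    have hmem := (Finset.mem_filter.mp hf).2
    have hspec := Sym2.other_spec' hmem
    refine Finset.mem_filter.mpr ⟨Finset.mem_univ _, ?_⟩
    apply G.mem_edgeSet.mp
    rw [hspec]
    exact f.2
  · intro u hu
    refine Finset.mem_filter.mpr ⟨Finset.mem_univ _, ?_⟩
    exact Sym2.mem_mk_left _ _
  · intro f hf
    have hmem := (Finset.mem_filter.mp hf).2
    exact Subtype.ext (Sym2.other_spec' hmem)
  · intro u hu
    have hmem : vv ∈ s(vv, u) := Sym2.mem_mk_left _ _
    have hspec := Sym2.other_spec' (((Finset.mem_filter.mp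
      ((Finset.mem_filter.mpr ⟨Finset.mem_univ _, hmem⟩ : _)))).2)
    exact Sym2.congr_right.mp (Sym2.other_spec' _)
  · intro f hf
    have hmem := (Finset.mem_filter.mp hf).2
    have hspec := Sym2.other_spec' hmem
    rw [hspec]
    unfold ext0
    rw [dif_pos f.2]

open Classical in
lemma lineAdj_sum_split {G : SimpleGraph V} [Fintype G.edgeSet] (x : G.edgeSet → ℝ)
    {u vv : V} (h : G.Adj u vv) :
    (∑ f : G.edgeSet, if G.lineGraph.Adj ⟨s(u,vv), G.mem_edgeSet.mpr h⟩ f then x f else 0)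
      = (∑ f : G.edgeSet, if u ∈ (f : Sym2 V) then x f else 0)
        + (∑ f : G.edgeSet, if vv ∈ (f : Sym2 V) then x f else 0)
        - 2 * x ⟨s(u,vv), G.mem_edgeSet.mpr h⟩ := by
  have hne : u ≠ vv := G.ne_of_adj h
  set e : G.edgeSet := ⟨s(u,vv), G.mem_edgeSet.mpr h⟩ with he
  have hpt : ∀ f : G.edgeSet, (if G.lineGraph.Adj e f then x f else 0)
      = ((if u ∈ (f : Sym2 V) then x f else 0) + (if vv ∈ (f : Sym2 V) then x f else 0))
        - (if f = e then 2 * x f else 0) := by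
    intro f
    by_cases hfe : f = e
    · subst hfe
      have hnadj : ¬ G.lineGraph.Adj e e := G.lineGraph.irrefl
      rw [if_neg hnadj, if_pos rfl]
      have h1 : u ∈ (e : Sym2 V) := Sym2.mem_mk_left _ _
      have h2 : vv ∈ (e : Sym2 V) := Sym2.mem_mk_right _ _
      rw [if_pos h1, if_pos h2]
      ring
    · by_cases hu : u ∈ (f : Sym2 V) <;> by_cases hv : vv ∈ (f : Sym2 V)
      · exfalso
        apply hfe
        apply Subtype.ext
        have := (Sym2.mem_and_mem_iff hne).mp ⟨hu, hv⟩
        rw [this, he]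
      · have hadj : G.lineGraph.Adj e f := by
          rw [SimpleGraph.lineGraph_adj_iff_exists]
          exact ⟨fun hh => hfe hh.symm, ⟨u, by rw [he]; exact Sym2.mem_mk_left _ _, hu⟩⟩
        rw [if_pos hadj, if_pos hu, if_neg hv, if_neg hfe]
        ring
      · have hadj : G.lineGraph.Adj e f := by
          rw [SimpleGraph.lineGraph_adj_iff_exists]
          exact ⟨fun hh => hfe hh.symm, ⟨vv, by rw [he]; exact Sym2.mem_mk_right _ _, hv⟩⟩
        rw [if_pos hadj, if_neg hu, if_pos hv, if_neg hfe]
        ring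
      · have hnadj : ¬ G.lineGraph.Adj e f := by
          rw [SimpleGraph.lineGraph_adj_iff_exists]
          rintro ⟨-, y, hy1, hy2⟩
          rw [he] at hy1
          rcases Sym2.mem_iff.mp hy1 with rfl | rfl
          · exact hu hy2
          · exact hv hy2
        rw [if_neg hnadj, if_neg hu, if_neg hv, if_neg hfe]
        ring
  rw [Finset.sum_congr rfl (fun f _ => hpt f), Finset.sum_sub_distrib,
    Finset.sum_add_distrib, Finset.sum_ite_eq' Finset.univ e (fun f => 2 * x f),
    if_pos (Finset.mem_univ _)]

/-- Translation from the line graph kernel to the vertex system. -/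
theorem line_to_K (G : SimpleGraph V) [Fintype G.edgeSet] :
    Module.finrank ℝ (LinearMap.ker (lineAdjMat G).mulVecLin)
      = Module.finrank ℝ (Kspace G (fun _ => 0)) := by
  classical
  have hkermem : ∀ x : G.edgeSet → ℝ, x ∈ LinearMap.ker (lineAdjMat G).mulVecLin
      ↔ ∀ e : G.edgeSet, (∑ f : G.edgeSet, if G.lineGraph.Adj e f then x f else 0) = 0 := by
    intro x
    have hmv : ∀ (e : G.edgeSet), (lineAdjMat G).mulVecLin x e
        = ∑ f : G.edgeSet, if G.lineGraph.Adj e f then x f else 0 := by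
      intro e
      rw [Matrix.mulVecLin_apply]
      show Matrix.mulVec _ x e = _
      rw [Matrix.mulVec, dotProduct]
      unfold lineAdjMat
      refine Finset.sum_congr rfl fun f _ => ?_
      split_ifs <;> ring
    rw [LinearMap.mem_ker, funext_iff]
    apply forall_congr'
    intro e
    rw [hmv e]
    simp
  set Φ : (G.edgeSet → ℝ) →ₗ[ℝ] (V → ℝ) :=
    Matrix.mulVecLin (Matrix.of fun vv (f : G.edgeSet) =>
      if vv ∈ (f : Sym2 V) then (1:ℝ) else 0) with hΦ
  set Ψ : (V → ℝ) →ₗ[ℝ] (G.edgeSet → ℝ) :=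
    Matrix.mulVecLin (Matrix.of fun (e : G.edgeSet) vv =>
      if vv ∈ (e : Sym2 V) then (1/2:ℝ) else 0) with hΨ
  have hΦval : ∀ (x : G.edgeSet → ℝ) vv, Φ x vv
      = ∑ f : G.edgeSet, if vv ∈ (f : Sym2 V) then x f else 0 := by
    intro x vv
    rw [hΦ, Matrix.mulVecLin_apply]
    show Matrix.mulVec _ x vv = _
    rw [Matrix.mulVec, dotProduct]
    refine Finset.sum_congr rfl fun f _ => ?_
    rw [Matrix.of_apply]
    split_ifs <;> ring
  have hΨval : ∀ (sf : V → ℝ) (u vv : V) (h : G.Adj u vv),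
      Ψ sf ⟨s(u,vv), G.mem_edgeSet.mpr h⟩ = (sf u + sf vv)/2 := by
    intro sf u vv h
    rw [hΨ, Matrix.mulVecLin_apply]
    show Matrix.mulVec _ sf _ = _
    rw [Matrix.mulVec, dotProduct]
    have hpt : ∀ y : V, (Matrix.of fun (e : G.edgeSet) vv =>
        if vv ∈ (e : Sym2 V) then (1/2:ℝ) else 0) ⟨s(u,vv), G.mem_edgeSet.mpr h⟩ y * sf y
        = if y ∈ s(u,vv) then sf y / 2 else 0 := by
      intro y
      rw [Matrix.of_apply]
      split_ifs <;> ring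
    rw [Finset.sum_congr rfl fun y _ => hpt y, ← Finset.sum_filter]
    have hfil : (Finset.univ.filter (fun y => y ∈ s(u,vv))) = {u, vv} := by
      ext y
      simp [Sym2.mem_iff]
    rw [hfil, Finset.sum_pair (G.ne_of_adj h)]
    ring
  have hA : ∀ x ∈ LinearMap.ker (lineAdjMat G).mulVecLin, ∀ u vv (h : G.Adj u vv),
      Φ x u + Φ x vv = 2 * x ⟨s(u,vv), G.mem_edgeSet.mpr h⟩ := by
    intro x hx u vv h
    have h0 := (hkermem x).mp hx ⟨s(u,vv), G.mem_edgeSet.mpr h⟩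
    rw [lineAdj_sum_split x h] at h0
    rw [hΦval, hΦval]
    linarith
  have hB : ∀ x ∈ LinearMap.ker (lineAdjMat G).mulVecLin, Φ x ∈ Kspace G (fun _ => 0) := by
    intro x hx
    apply mem_Kspace.mpr
    intro vv
    have hpt : ∀ u, (if G.Adj vv u then Φ x u else 0)
        = (if G.Adj vv u then 2 * ext0 G x s(vv,u) - Φ x vv else 0) := by
      intro u
      by_cases h : G.Adj vv u
      · rw [if_pos h, if_pos h, ext0_adj _ h]
        have := hA x hx vv u h
        linarith
      · rw [if_neg h, if_neg h]
    rw [Finset.sum_congr rfl fun u _ => hpt u]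
    have hsub : (∑ u, if G.Adj vv u then 2 * ext0 G x s(vv,u) - Φ x vv else 0)
        = (∑ u, if G.Adj vv u then 2 * ext0 G x s(vv,u) else 0)
          - (∑ u, if G.Adj vv u then Φ x vv else 0) := by
      rw [← Finset.sum_sub_distrib]
      refine Finset.sum_congr rfl fun u _ => ?_
      split_ifs <;> ring
    rw [hsub]
    have h2e : (∑ u, if G.Adj vv u then 2 * ext0 G x s(vv,u) else 0)
        = 2 * ∑ u, (if G.Adj vv u then ext0 G x s(vv,u) else 0) := by
      rw [Finset.mul_sum]
      refine Finset.sum_congr rfl fun u _ => ?_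
      split_ifs <;> ring
    rw [h2e, ← incidence_reindex x vv, ← hΦval x vv]
    have hconst : (∑ u, if G.Adj vv u then Φ x vv else 0) = (dg G vv : ℝ) * Φ x vv := by
      rw [← Finset.sum_filter, Finset.sum_const, nsmul_eq_mul]
      rfl
    rw [hconst]
    push_cast
    ring
  have hD : ∀ sf ∈ Kspace G (fun _ => 0), ∀ vv, Φ (Ψ sf) vv = sf vv := by
    intro sf hs vv
    rw [hΦval, incidence_reindex (Ψ sf) vv]
    have hpt : ∀ u, (if G.Adj vv u then ext0 G (Ψ sf) s(vv,u) else 0)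
        = (if G.Adj vv u then sf vv / 2 + sf u / 2 else 0) := by
      intro u
      by_cases h : G.Adj vv u
      · rw [if_pos h, if_pos h, ext0_adj _ h, hΨval sf vv u h]
        ring
      · rw [if_neg h, if_neg h]
    rw [Finset.sum_congr rfl fun u _ => hpt u]
    have hsplit : (∑ u, if G.Adj vv u then sf vv / 2 + sf u / 2 else 0)
        = (dg G vv : ℝ) * (sf vv / 2) + (∑ u, if G.Adj vv u then sf u else 0) / 2 := by
      have h1 : (∑ u, if G.Adj vv u then sf vv / 2 + sf u / 2 else 0)
          = (∑ u, if G.Adj vv u then sf vv / 2 else 0)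
            + (∑ u, if G.Adj vv u then sf u / 2 else 0) := by
        rw [← Finset.sum_add_distrib]
        refine Finset.sum_congr rfl fun u _ => ?_
        split_ifs <;> ring
      have h2 : (∑ u, if G.Adj vv u then sf vv / 2 else 0) = (dg G vv : ℝ) * (sf vv / 2) := by
        rw [← Finset.sum_filter, Finset.sum_const, nsmul_eq_mul]
        rfl
      have h3 : (∑ u, if G.Adj vv u then sf u / 2 else 0)
          = (∑ u, if G.Adj vv u then sf u else 0) / 2 := by
        rw [Finset.sum_div]
        refine Finset.sum_congr rfl fun u _ => ?_
        split_ifs <;> ring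
      rw [h1, h2, h3]
    rw [hsplit]
    have hk := mem_Kspace.mp hs vv
    push_cast at hk
    linarith
  have hC : ∀ sf ∈ Kspace G (fun _ => 0), Ψ sf ∈ LinearMap.ker (lineAdjMat G).mulVecLin := by
    intro sf hs
    rw [hkermem]
    intro e
    obtain ⟨z, hz⟩ := e
    revert hz
    induction z using Sym2.ind with
    | _ u vv =>
    intro hz
    have hadj : G.Adj u vv := G.mem_edgeSet.mp hz
    rw [show (⟨s(u,vv), hz⟩ : G.edgeSet) = ⟨s(u,vv), G.mem_edgeSet.mpr hadj⟩ from rfl]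
    rw [lineAdj_sum_split (Ψ sf) hadj]
    rw [← hΦval (Ψ sf) u, ← hΦval (Ψ sf) vv]
    rw [hD sf hs u, hD sf hs vv, hΨval sf u vv hadj]
    ring
  refine finrank_eq_of_maps _ _ Φ Ψ hB hC ?_ ?_
  · intro x hx
    funext e
    obtain ⟨z, hz⟩ := e
    revert hz
    induction z using Sym2.ind with
    | _ u vv =>
    intro hz
    have hadj : G.Adj u vv := G.mem_edgeSet.mp hz
    show Ψ (Φ x) ⟨s(u,vv), hz⟩ = x ⟨s(u,vv), hz⟩
    rw [show (⟨s(u,vv), hz⟩ : G.edgeSet) = ⟨s(u,vv), G.mem_edgeSet.mpr hadj⟩ from rfl]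
    rw [hΨval (Φ x) u vv hadj]
    have := hA x hx u vv hadj
    linarith
  · intro sf hs
    funext vv
    exact hD sf hs vv

end UnicyclicAux

open UnicyclicAux in
theorem stmt18 {V : Type*} [Fintype V] [DecidableEq V] (G : SimpleGraph V)
    [Fintype G.edgeSet] (hG : G.Connected)
    -- `G` is unicyclic: connected with as many edges as vertices
    (huni : Fintype.card G.edgeSet = Fintype.card V)
    -- the nullity of `A(L(G))` is exactly `2`
    (hnull : Module.finrank ℝ (LinearMap.ker (lineAdjMat G).mulVecLin) = 2) :
    -- the length of the unique cycle of `G` is divisible by `4`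
    ∀ (v : V) (w : G.Walk v v), w.IsCycle → 4 ∣ w.length := by
  intro v w hw
  classical
  have h3len : 3 ≤ w.length := hw.three_le_length
  have hcard : 1 < Fintype.card V := by
    have hnd := hw.support_nodup
    have hlen := hnd.length_le_card
    have hl := w.length_support
    have htl : w.support.tail.length = w.length := by
      rw [support_eq_cons' w] at hl
      simpa using hl
    omega
  have hdeg : ∀ x, dg G x ≠ 0 := by
    intro x
    obtain ⟨u, hu⟩ := Fintype.exists_ne_of_one_lt_card hcard x
    obtain ⟨p⟩ := hG.preconnected x u
    cases p with
    | nil => exact absurd rfl hu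
    | cons h q => exact dg_ne_zero_of_adj h
  refine aux (Fintype.card V) G (fun _ => 0) v w hw huni ?_ ?_ ?_ ?_ ?_
  · rw [Finset.filter_true_of_mem (fun x _ => hdeg x), Finset.card_univ]
  · exact fun x y _ _ => hG.preconnected x y
  · exact fun x _ => rfl
  · intro x; rw [padicNorm.zero]; norm_num
  · rw [← line_to_K G]
    exact hnull
end
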